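/- arXiv:1008.3628 — 4 statements merged into one kernel-verified Lean document; each statement's English description precedes it below -/
import Mathlib

section
/- For every u ∈ U, the embedding-energy second variation satisfies the identity ε Σ_{ℓ=−N+1}^{N} { G''_F[ρ'_F(u'_ℓ + u'_{ℓ+1}) + ρ'_{2F}(u'_{ℓ−1} + u'_ℓ + u'_{ℓ+1} + u'_{ℓ+2})]² + G'_F[ρ''_F(u'_ℓ)² + ρ''_{2F}(u'_ℓ + u'_{ℓ−1})² + ρ''_F(u'_{ℓ+1})² + ρ''_{2F}(u'_{ℓ+1} + u'_{ℓ+2})²] } = [4G''_F(ρ'_F + 2ρ'_{2F})² + 2G'_F(ρ''_F + 4ρ''_{2F})]‖Du‖²_{ℓ²ε} − ε²[G''_F((ρ'_F)² + 20(ρ'_{2F})² + 12ρ'_F ρ'_{2F}) + 2G'_F ρ''_{2F}]‖D²u‖²_{ℓ²ε} + ε⁴ G''_F[8(ρ'_{2F})² + 2ρ'_F ρ'_{2F}]‖D³u‖²_{ℓ²ε} − ε⁶ G''_F(ρ'_{2F})² ‖D⁴u‖²_{ℓ²ε}. -/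
open Finset

noncomputable section

/-- `u` is `2N`-periodic. -/
def IsPer (N : ℤ) (u : ℤ → ℝ) : Prop := ∀ ℓ : ℤ, u (ℓ + 2*N) = u ℓ

/-- `u` belongs to the displacement space `U`: `2N`-periodic with zero mean. -/
def InU (N : ℤ) (u : ℤ → ℝ) : Prop :=
  IsPer N u ∧ ∑ ℓ ∈ Finset.Icc (-N+1) N, u ℓ = 0

/-- the scaled reference atomic spacing `ε = 1/N`. -/
def eps (N : ℤ) : ℝ := 1 / (N : ℝ)

/-- discrete derivative `(Dv)_ℓ = (v_ℓ - v_{ℓ-1})/ε`. -/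
def Dd (N : ℤ) (v : ℤ → ℝ) : ℤ → ℝ := fun ℓ => (v ℓ - v (ℓ-1)) / eps N

/-- squared `ℓ²ε` norm: `ε Σ_{ℓ=-N+1}^{N} v_ℓ²`. -/
def nrm2 (N : ℤ) (v : ℤ → ℝ) : ℝ := eps N * ∑ ℓ ∈ Finset.Icc (-N+1) N, (v ℓ)^2

/-- Sums of `2N`-periodic sequences over a full period are shift invariant. -/
lemma icc_shift_sum (N : ℤ) (hN : 1 ≤ N) (f : ℤ → ℝ)
    (hf : ∀ ℓ, f (ℓ + 2*N) = f ℓ) (k : ℤ) :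
    ∑ ℓ ∈ Finset.Icc (-N+1) N, f (ℓ + k) = ∑ ℓ ∈ Finset.Icc (-N+1) N, f ℓ := by
  have base : ∀ (g : ℤ → ℝ), (∀ ℓ, g (ℓ + 2*N) = g ℓ) →
      ∑ ℓ ∈ Finset.Icc (-N+1) N, g (ℓ + 1) = ∑ ℓ ∈ Finset.Icc (-N+1) N, g ℓ := by
    intro g hg
    have h1 : ∑ m ∈ Finset.Icc (-N+1+1) (N+1), g m
        = ∑ ℓ ∈ Finset.Icc (-N+1) N, g (ℓ + 1) := by
      rw [← Finset.map_add_right_Icc, Finset.sum_map]; rfl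
    have e1 : Finset.Icc (-N+1+1) (N+1) = insert (N+1) (Finset.Icc (-N+1+1) N) := by
      ext x; simp only [Finset.mem_Icc, Finset.mem_insert]; omega
    have e2 : Finset.Icc (-N+1) N = insert (-N+1) (Finset.Icc (-N+1+1) N) := by
      ext x; simp only [Finset.mem_Icc, Finset.mem_insert]; omega
    have m1 : (N+1) ∉ Finset.Icc (-N+1+1) N := by simp only [Finset.mem_Icc]; omega
    have m2 : (-N+1) ∉ Finset.Icc (-N+1+1) N := by simp only [Finset.mem_Icc]; omega
    rw [← h1, e1, Finset.sum_insert m1, e2, Finset.sum_insert m2]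
    rw [show N+1 = (-N+1) + 2*N by ring, hg]
  have natcase : ∀ (n : ℕ) (g : ℤ → ℝ), (∀ ℓ, g (ℓ + 2*N) = g ℓ) →
      ∑ ℓ ∈ Finset.Icc (-N+1) N, g (ℓ + (n : ℤ)) = ∑ ℓ ∈ Finset.Icc (-N+1) N, g ℓ := by
    intro n
    induction n with
    | zero => intro g hg; simp
    | succ m ih =>
      intro g hg
      have hbase := base (fun x => g (x + (m:ℤ))) (fun ℓ => by
        rw [show ℓ + 2*N + (m:ℤ) = (ℓ + (m:ℤ)) + 2*N by ring, hg])
      calc ∑ ℓ ∈ Finset.Icc (-N+1) N, g (ℓ + ((m + 1 : ℕ) : ℤ))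
          = ∑ ℓ ∈ Finset.Icc (-N+1) N, g ((ℓ + 1) + (m:ℤ)) := by
            refine Finset.sum_congr rfl fun ℓ _ => ?_
            rw [show ℓ + ((m + 1 : ℕ) : ℤ) = (ℓ + 1) + (m:ℤ) by push_cast; ring]
        _ = ∑ ℓ ∈ Finset.Icc (-N+1) N, g (ℓ + (m:ℤ)) := hbase
        _ = ∑ ℓ ∈ Finset.Icc (-N+1) N, g ℓ := ih g hg
  by_cases hk : 0 ≤ k
  · obtain ⟨n, rfl⟩ := Int.eq_ofNat_of_zero_le hk
    exact natcase n f hf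
  · push_neg at hk
    obtain ⟨n, hn⟩ := Int.eq_ofNat_of_zero_le (le_of_lt (neg_pos.mpr hk))
    have hper : ∀ ℓ, (fun x => f (x + k)) (ℓ + 2*N) = f (ℓ + k) := fun ℓ => by
      simp only
      rw [show ℓ + 2*N + k = (ℓ + k) + 2*N by ring, hf]
    have h1 := natcase n (fun x => f (x + k)) hper
    have h2 : ∑ ℓ ∈ Finset.Icc (-N+1) N, f (ℓ + (n:ℤ) + k)
        = ∑ ℓ ∈ Finset.Icc (-N+1) N, f ℓ := by
      refine Finset.sum_congr rfl fun ℓ _ => ?_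
      rw [show ℓ + (n:ℤ) + k = ℓ by omega]
    exact h1.symm.trans h2

/-- Shift-invariance for products of a periodic sequence. -/
lemma prod_shift (N : ℤ) (hN : 1 ≤ N) (w : ℤ → ℝ)
    (hw : ∀ ℓ, w (ℓ + 2*N) = w ℓ) (a c : ℤ) :
    ∑ ℓ ∈ Finset.Icc (-N+1) N, w (ℓ + a) * w (ℓ + (a + c))
      = ∑ ℓ ∈ Finset.Icc (-N+1) N, w ℓ * w (ℓ + c) := by
  have hf : ∀ ℓ, (fun m => w m * w (m + c)) (ℓ + 2*N) = (fun m => w m * w (m + c)) ℓ :=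
    fun ℓ => by
      simp only
      rw [hw, show ℓ + 2*N + c = (ℓ + c) + 2*N by ring, hw]
  have h := icc_shift_sum N hN (fun m => w m * w (m + c)) hf a
  refine Eq.trans (Finset.sum_congr rfl fun ℓ _ => ?_) h
  show w (ℓ + a) * w (ℓ + (a + c)) = w (ℓ + a) * w (ℓ + a + c)
  rw [show ℓ + (a + c) = ℓ + a + c by ring]

/-- Shift-invariance for squares of a periodic sequence. -/
lemma sq_shift (N : ℤ) (hN : 1 ≤ N) (w : ℤ → ℝ)
    (hw : ∀ ℓ, w (ℓ + 2*N) = w ℓ) (a : ℤ) :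
    ∑ ℓ ∈ Finset.Icc (-N+1) N, w (ℓ + a) * w (ℓ + a)
      = ∑ ℓ ∈ Finset.Icc (-N+1) N, w ℓ * w ℓ :=
  icc_shift_sum N hN (fun m => w m * w m) (fun ℓ => by rw [hw]) a

/-- the embedding-energy second variation identity. -/
theorem embedding_second_variation (N : ℤ) (hN : 1 ≤ N)
    (pF p2F rF r2F rrF rr2F g1 g2 : ℝ) (u : ℤ → ℝ) (hu : InU N u) :
    eps N * ∑ ℓ ∈ Finset.Icc (-N+1) N,
      (g2 * (rF * (Dd N u ℓ + Dd N u (ℓ+1))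
          + r2F * (Dd N u (ℓ-1) + Dd N u ℓ + Dd N u (ℓ+1) + Dd N u (ℓ+2)))^2
       + g1 * (rrF * (Dd N u ℓ)^2 + rr2F * (Dd N u ℓ + Dd N u (ℓ-1))^2
             + rrF * (Dd N u (ℓ+1))^2 + rr2F * (Dd N u (ℓ+1) + Dd N u (ℓ+2))^2))
    = (4*g2*(rF + 2*r2F)^2 + 2*g1*(rrF + 4*rr2F)) * nrm2 N (Dd N u)
      - (eps N)^2 * (g2*(rF^2 + 20*r2F^2 + 12*rF*r2F) + 2*g1*rr2F)
          * nrm2 N (Dd N (Dd N u))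
      + (eps N)^4 * (g2*(8*r2F^2 + 2*rF*r2F)) * nrm2 N (Dd N (Dd N (Dd N u)))
      - (eps N)^6 * (g2*r2F^2) * nrm2 N (Dd N (Dd N (Dd N (Dd N u)))) := by
  have hNR : (0:ℝ) < (N:ℝ) := by exact_mod_cast lt_of_lt_of_le Int.zero_lt_one hN
  have hε : eps N ≠ 0 := by rw [eps]; exact one_div_ne_zero hNR.ne'
  set w : ℤ → ℝ := Dd N u with hwdef
  have hw : ∀ ℓ, w (ℓ + 2*N) = w ℓ := by
    intro ℓ
    show Dd N u (ℓ + 2*N) = Dd N u ℓ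
    simp only [Dd]
    rw [hu.1 ℓ, show ℓ + 2*N - 1 = (ℓ-1) + 2*N by ring, hu.1 (ℓ-1)]
  set T := Finset.Icc (-N+1) N with hT
  -- the canonical correlation sums
  -- p-lemmas reducing shifted products to canonical sums
  have p_mm : ∑ ℓ ∈ T, w (ℓ-1) * w (ℓ-1) = ∑ ℓ ∈ T, w ℓ * w ℓ := by
    refine Eq.trans (Finset.sum_congr rfl fun ℓ _ => ?_) (sq_shift N hN w hw (-1))
    rw [show ℓ - 1 = ℓ + (-1) by ring]
  have p_11 : ∑ ℓ ∈ T, w (ℓ+1) * w (ℓ+1) = ∑ ℓ ∈ T, w ℓ * w ℓ := sq_shift N hN w hw 1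
  have p_22 : ∑ ℓ ∈ T, w (ℓ+2) * w (ℓ+2) = ∑ ℓ ∈ T, w ℓ * w ℓ := sq_shift N hN w hw 2
  have p_2m2 : ∑ ℓ ∈ T, w (ℓ-2) * w (ℓ-2) = ∑ ℓ ∈ T, w ℓ * w ℓ := by
    refine Eq.trans (Finset.sum_congr rfl fun ℓ _ => ?_) (sq_shift N hN w hw (-2))
    rw [show ℓ - 2 = ℓ + (-2) by ring]
  have p_33 : ∑ ℓ ∈ T, w (ℓ-3) * w (ℓ-3) = ∑ ℓ ∈ T, w ℓ * w ℓ := by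
    refine Eq.trans (Finset.sum_congr rfl fun ℓ _ => ?_) (sq_shift N hN w hw (-3))
    rw [show ℓ - 3 = ℓ + (-3) by ring]
  have p_m0 : ∑ ℓ ∈ T, w (ℓ-1) * w ℓ = ∑ ℓ ∈ T, w ℓ * w (ℓ+1) := by
    refine Eq.trans (Finset.sum_congr rfl fun ℓ _ => ?_) (prod_shift N hN w hw (-1) 1)
    rw [show ℓ + ((-1) + 1) = ℓ by ring, show ℓ + (-1) = ℓ - 1 by ring]
  have p_m1 : ∑ ℓ ∈ T, w (ℓ-1) * w (ℓ+1) = ∑ ℓ ∈ T, w ℓ * w (ℓ+2) := by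
    refine Eq.trans (Finset.sum_congr rfl fun ℓ _ => ?_) (prod_shift N hN w hw (-1) 2)
    rw [show ℓ + ((-1) + 2) = ℓ + 1 by ring, show ℓ + (-1) = ℓ - 1 by ring]
  have p_m2 : ∑ ℓ ∈ T, w (ℓ-1) * w (ℓ+2) = ∑ ℓ ∈ T, w ℓ * w (ℓ+3) := by
    refine Eq.trans (Finset.sum_congr rfl fun ℓ _ => ?_) (prod_shift N hN w hw (-1) 3)
    rw [show ℓ + ((-1) + 3) = ℓ + 2 by ring, show ℓ + (-1) = ℓ - 1 by ring]
  have p_12 : ∑ ℓ ∈ T, w (ℓ+1) * w (ℓ+2) = ∑ ℓ ∈ T, w ℓ * w (ℓ+1) := by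
    refine Eq.trans (Finset.sum_congr rfl fun ℓ _ => ?_) (prod_shift N hN w hw 1 1)
    rw [show ℓ + ((1:ℤ) + 1) = ℓ + 2 by ring]
  have p_20 : ∑ ℓ ∈ T, w (ℓ-2) * w ℓ = ∑ ℓ ∈ T, w ℓ * w (ℓ+2) := by
    refine Eq.trans (Finset.sum_congr rfl fun ℓ _ => ?_) (prod_shift N hN w hw (-2) 2)
    rw [show ℓ + ((-2) + 2) = ℓ by ring, show ℓ + (-2) = ℓ - 2 by ring]
  have p_2m1 : ∑ ℓ ∈ T, w (ℓ-2) * w (ℓ-1) = ∑ ℓ ∈ T, w ℓ * w (ℓ+1) := by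
    refine Eq.trans (Finset.sum_congr rfl fun ℓ _ => ?_) (prod_shift N hN w hw (-2) 1)
    rw [show ℓ + ((-2) + 1) = ℓ - 1 by ring, show ℓ + (-2) = ℓ - 2 by ring]
  have p_30 : ∑ ℓ ∈ T, w (ℓ-3) * w ℓ = ∑ ℓ ∈ T, w ℓ * w (ℓ+3) := by
    refine Eq.trans (Finset.sum_congr rfl fun ℓ _ => ?_) (prod_shift N hN w hw (-3) 3)
    rw [show ℓ + ((-3) + 3) = ℓ by ring, show ℓ + (-3) = ℓ - 3 by ring]
  have p_3m1 : ∑ ℓ ∈ T, w (ℓ-3) * w (ℓ-1) = ∑ ℓ ∈ T, w ℓ * w (ℓ+2) := by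
    refine Eq.trans (Finset.sum_congr rfl fun ℓ _ => ?_) (prod_shift N hN w hw (-3) 2)
    rw [show ℓ + ((-3) + 2) = ℓ - 1 by ring, show ℓ + (-3) = ℓ - 3 by ring]
  have p_3m2 : ∑ ℓ ∈ T, w (ℓ-3) * w (ℓ-2) = ∑ ℓ ∈ T, w ℓ * w (ℓ+1) := by
    refine Eq.trans (Finset.sum_congr rfl fun ℓ _ => ?_) (prod_shift N hN w hw (-3) 1)
    rw [show ℓ + ((-3) + 1) = ℓ - 2 by ring, show ℓ + (-3) = ℓ - 3 by ring]
  -- expansion of the left-hand sum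
  have hLsum : ∑ ℓ ∈ T,
      (g2 * (rF * (w ℓ + w (ℓ+1))
          + r2F * (w (ℓ-1) + w ℓ + w (ℓ+1) + w (ℓ+2)))^2
       + g1 * (rrF * (w ℓ)^2 + rr2F * (w ℓ + w (ℓ-1))^2
             + rrF * (w (ℓ+1))^2 + rr2F * (w (ℓ+1) + w (ℓ+2))^2))
      = (2*g2*r2F^2 + 2*g1*rr2F + 2*g2*(rF+r2F)^2 + 2*g1*(rrF+rr2F))
          * ∑ ℓ ∈ T, w ℓ * w ℓ
        + (2*g2*r2F*(rF+r2F) + 2*g1*rr2F + 2*g2*(rF+r2F)^2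
             + 2*g2*r2F*(rF+r2F) + 2*g1*rr2F) * ∑ ℓ ∈ T, w ℓ * w (ℓ+1)
        + (4*g2*r2F*(rF+r2F)) * ∑ ℓ ∈ T, w ℓ * w (ℓ+2)
        + (2*g2*r2F^2) * ∑ ℓ ∈ T, w ℓ * w (ℓ+3) := by
    calc ∑ ℓ ∈ T,
        (g2 * (rF * (w ℓ + w (ℓ+1))
            + r2F * (w (ℓ-1) + w ℓ + w (ℓ+1) + w (ℓ+2)))^2
         + g1 * (rrF * (w ℓ)^2 + rr2F * (w ℓ + w (ℓ-1))^2
               + rrF * (w (ℓ+1))^2 + rr2F * (w (ℓ+1) + w (ℓ+2))^2))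
        = ∑ ℓ ∈ T,
          ((g2*r2F^2 + g1*rr2F) * (w (ℓ-1) * w (ℓ-1))
           + (2*g2*r2F*(rF+r2F) + 2*g1*rr2F) * (w (ℓ-1) * w ℓ)
           + (2*g2*r2F*(rF+r2F)) * (w (ℓ-1) * w (ℓ+1))
           + (2*g2*r2F^2) * (w (ℓ-1) * w (ℓ+2))
           + (g2*(rF+r2F)^2 + g1*(rrF+rr2F)) * (w ℓ * w ℓ)
           + (2*g2*(rF+r2F)^2) * (w ℓ * w (ℓ+1))
           + (2*g2*r2F*(rF+r2F)) * (w ℓ * w (ℓ+2))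
           + (g2*(rF+r2F)^2 + g1*(rrF+rr2F)) * (w (ℓ+1) * w (ℓ+1))
           + (2*g2*r2F*(rF+r2F) + 2*g1*rr2F) * (w (ℓ+1) * w (ℓ+2))
           + (g2*r2F^2 + g1*rr2F) * (w (ℓ+2) * w (ℓ+2))) :=
          Finset.sum_congr rfl fun ℓ _ => by ring
      _ = _ := by
          simp only [Finset.sum_add_distrib, ← Finset.mul_sum]
          rw [p_mm, p_m0, p_m1, p_m2, p_11, p_12, p_22]
          ring
  -- the norms
  have hn1 : nrm2 N w = eps N * ∑ ℓ ∈ T, w ℓ * w ℓ := by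
    rw [nrm2]
    congr 1
    exact Finset.sum_congr rfl fun ℓ _ => by ring
  have hn2 : (eps N)^2 * nrm2 N (Dd N w)
      = eps N * (2 * ∑ ℓ ∈ T, w ℓ * w ℓ - 2 * ∑ ℓ ∈ T, w ℓ * w (ℓ+1)) := by
    have step : ∀ ℓ : ℤ, (eps N)^2 * (Dd N w ℓ)^2
        = w ℓ * w ℓ + (-2)*(w (ℓ-1) * w ℓ) + w (ℓ-1) * w (ℓ-1) := by
      intro ℓ; simp only [Dd]; field_simp; ring
    calc (eps N)^2 * nrm2 N (Dd N w)
        = eps N * ∑ ℓ ∈ T, ((eps N)^2 * (Dd N w ℓ)^2) := by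
          simp only [nrm2, Finset.mul_sum]
          exact Finset.sum_congr rfl fun ℓ _ => by ring
      _ = eps N * ∑ ℓ ∈ T,
            (w ℓ * w ℓ + (-2)*(w (ℓ-1) * w ℓ) + w (ℓ-1) * w (ℓ-1)) := by
          rw [Finset.sum_congr rfl fun ℓ _ => step ℓ]
      _ = _ := by
          simp only [Finset.sum_add_distrib, ← Finset.mul_sum]
          rw [p_mm, p_m0]
          ring
  have hn3 : (eps N)^4 * nrm2 N (Dd N (Dd N w))
      = eps N * (6 * ∑ ℓ ∈ T, w ℓ * w ℓ - 8 * ∑ ℓ ∈ T, w ℓ * w (ℓ+1)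
          + 2 * ∑ ℓ ∈ T, w ℓ * w (ℓ+2)) := by
    have step : ∀ ℓ : ℤ, (eps N)^4 * (Dd N (Dd N w) ℓ)^2
        = w ℓ * w ℓ + 4*(w (ℓ-1) * w (ℓ-1)) + w (ℓ-2) * w (ℓ-2)
          + (-4)*(w (ℓ-1) * w ℓ) + 2*(w (ℓ-2) * w ℓ) + (-4)*(w (ℓ-2) * w (ℓ-1)) := by
      intro ℓ
      simp only [Dd]
      rw [show ℓ - 1 - 1 = ℓ - 2 by ring]
      field_simp; ring
    calc (eps N)^4 * nrm2 N (Dd N (Dd N w))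
        = eps N * ∑ ℓ ∈ T, ((eps N)^4 * (Dd N (Dd N w) ℓ)^2) := by
          simp only [nrm2, Finset.mul_sum]
          exact Finset.sum_congr rfl fun ℓ _ => by ring
      _ = eps N * ∑ ℓ ∈ T,
            (w ℓ * w ℓ + 4*(w (ℓ-1) * w (ℓ-1)) + w (ℓ-2) * w (ℓ-2)
             + (-4)*(w (ℓ-1) * w ℓ) + 2*(w (ℓ-2) * w ℓ)
             + (-4)*(w (ℓ-2) * w (ℓ-1))) := by
          rw [Finset.sum_congr rfl fun ℓ _ => step ℓ]
      _ = _ := by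
          simp only [Finset.sum_add_distrib, ← Finset.mul_sum]
          rw [p_mm, p_2m2, p_m0, p_20, p_2m1]
          ring
  have hn4 : (eps N)^6 * nrm2 N (Dd N (Dd N (Dd N w)))
      = eps N * (20 * ∑ ℓ ∈ T, w ℓ * w ℓ - 30 * ∑ ℓ ∈ T, w ℓ * w (ℓ+1)
          + 12 * ∑ ℓ ∈ T, w ℓ * w (ℓ+2) - 2 * ∑ ℓ ∈ T, w ℓ * w (ℓ+3)) := by
    have step : ∀ ℓ : ℤ, (eps N)^6 * (Dd N (Dd N (Dd N w)) ℓ)^2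
        = w ℓ * w ℓ + 9*(w (ℓ-1) * w (ℓ-1)) + 9*(w (ℓ-2) * w (ℓ-2))
          + w (ℓ-3) * w (ℓ-3)
          + (-6)*(w (ℓ-1) * w ℓ) + (-18)*(w (ℓ-2) * w (ℓ-1))
          + (-6)*(w (ℓ-3) * w (ℓ-2)) + 6*(w (ℓ-2) * w ℓ)
          + 6*(w (ℓ-3) * w (ℓ-1)) + (-2)*(w (ℓ-3) * w ℓ) := by
      intro ℓ
      simp only [Dd]
      rw [show ℓ - 1 - 1 = ℓ - 2 by ring]
      rw [show ℓ - 2 - 1 = ℓ - 3 by ring]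
      field_simp; ring
    calc (eps N)^6 * nrm2 N (Dd N (Dd N (Dd N w)))
        = eps N * ∑ ℓ ∈ T, ((eps N)^6 * (Dd N (Dd N (Dd N w)) ℓ)^2) := by
          simp only [nrm2, Finset.mul_sum]
          exact Finset.sum_congr rfl fun ℓ _ => by ring
      _ = eps N * ∑ ℓ ∈ T,
            (w ℓ * w ℓ + 9*(w (ℓ-1) * w (ℓ-1)) + 9*(w (ℓ-2) * w (ℓ-2))
             + w (ℓ-3) * w (ℓ-3)
             + (-6)*(w (ℓ-1) * w ℓ) + (-18)*(w (ℓ-2) * w (ℓ-1))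
             + (-6)*(w (ℓ-3) * w (ℓ-2)) + 6*(w (ℓ-2) * w ℓ)
             + 6*(w (ℓ-3) * w (ℓ-1)) + (-2)*(w (ℓ-3) * w ℓ)) := by
          rw [Finset.sum_congr rfl fun ℓ _ => step ℓ]
      _ = _ := by
          simp only [Finset.sum_add_distrib, ← Finset.mul_sum]
          rw [p_mm, p_2m2, p_33, p_m0, p_2m1, p_3m2, p_20, p_3m1, p_30]
          ring
  linear_combination (eps N) * hLsum
    - (4*g2*(rF + 2*r2F)^2 + 2*g1*(rrF + 4*rr2F)) * hn1
    + (g2*(rF^2 + 20*r2F^2 + 12*rF*r2F) + 2*g1*rr2F) * hn2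
    - (g2*(8*r2F^2 + 2*rF*r2F)) * hn3
    + (g2*r2F^2) * hn4
end
end

section
/- For every u ∈ U, Q^a(u) = A_F ‖Du‖²_{ℓ²ε} + ε² B_F ‖D²u‖²_{ℓ²ε} + ε⁴ C_F ‖D³u‖²_{ℓ²ε} + ε⁶ D_F ‖D⁴u‖²_{ℓ²ε}. -/
open Finset

noncomputable section

/-- the atomistic second-variation quadratic form `Q^a`. -/
def Qa (N : ℤ) (pF p2F rF r2F rrF rr2F g1 g2 : ℝ) (u : ℤ → ℝ) : ℝ :=
  eps N * ∑ ℓ ∈ Finset.Icc (-N+1) N,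
    (g2 * (rF * (Dd N u ℓ + Dd N u (ℓ+1))
        + r2F * (Dd N u (ℓ-1) + Dd N u ℓ + Dd N u (ℓ+1) + Dd N u (ℓ+2)))^2
     + g1 * (rrF * (Dd N u ℓ)^2 + rr2F * (Dd N u ℓ + Dd N u (ℓ-1))^2
           + rrF * (Dd N u (ℓ+1))^2 + rr2F * (Dd N u (ℓ+1) + Dd N u (ℓ+2))^2)
     + (1/2) * (pF * ((Dd N u ℓ)^2 + (Dd N u (ℓ+1))^2)
           + p2F * ((Dd N u ℓ + Dd N u (ℓ-1))^2 + (Dd N u (ℓ+1) + Dd N u (ℓ+2))^2)))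

/-- `Ã_F = φ''_F + 4φ''_{2F}`. -/
def Atil (pF p2F : ℝ) : ℝ := pF + 4*p2F

/-- `Â_F = 4G''_F(ρ'_F+2ρ'_{2F})² + 2G'_F(ρ''_F+4ρ''_{2F})`. -/
def Ahat (rF r2F rrF rr2F g1 g2 : ℝ) : ℝ := 4*g2*(rF + 2*r2F)^2 + 2*g1*(rrF + 4*rr2F)

/-- `A_F = Â_F + Ã_F`. -/
def AFc (pF p2F rF r2F rrF rr2F g1 g2 : ℝ) : ℝ := Ahat rF r2F rrF rr2F g1 g2 + Atil pF p2F

/-- `B_F`. -/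
def BFc (p2F rF r2F rr2F g1 g2 : ℝ) : ℝ :=
  -(p2F + g2*(rF^2 + 20*r2F^2 + 12*rF*r2F) + 2*g1*rr2F)

/-- `C_F`. -/
def CFc (rF r2F g2 : ℝ) : ℝ := g2*(8*r2F^2 + 2*rF*r2F)

/-- `D_F`. -/
def DFc (r2F g2 : ℝ) : ℝ := -(g2*r2F^2)

/-- `λ_F(s) = A_F + B_F s + C_F s² + D_F s³`. -/
def lamF (pF p2F rF r2F rrF rr2F g1 g2 s : ℝ) : ℝ :=
  AFc pF p2F rF r2F rrF rr2F g1 g2 + BFc p2F rF r2F rr2F g1 g2 * s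
    + CFc rF r2F g2 * s^2 + DFc r2F g2 * s^3


lemma shift_one (N : ℤ) (hN : 1 ≤ N) (f : ℤ → ℝ) (hf : ∀ ℓ, f (ℓ + 2*N) = f ℓ) :
    ∑ ℓ ∈ Finset.Icc (-N+1) N, f (ℓ+1) = ∑ ℓ ∈ Finset.Icc (-N+1) N, f ℓ := by
  have h1 : ∑ ℓ ∈ Finset.Icc (-N+1) N, f (ℓ+1) = ∑ ℓ ∈ Finset.Icc (-N+2) (N+1), f ℓ := by
    rw [show (-N+2 : ℤ) = (-N+1) + 1 by ring, ← Finset.map_add_right_Icc, Finset.sum_map]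
    rfl
  have h2 : Finset.Icc (-N+1 : ℤ) (N+1) = insert (-N+1) (Finset.Icc (-N+2) (N+1)) := by
    ext x; simp only [Finset.mem_Icc, Finset.mem_insert]; omega
  have h3 : Finset.Icc (-N+1 : ℤ) (N+1) = insert (N+1) (Finset.Icc (-N+1) N) := by
    ext x; simp only [Finset.mem_Icc, Finset.mem_insert]; omega
  have hni1 : (-N+1 : ℤ) ∉ Finset.Icc (-N+2 : ℤ) (N+1) := by intro h; rw [Finset.mem_Icc] at h; omega
  have hni2 : (N+1 : ℤ) ∉ Finset.Icc (-N+1 : ℤ) N := by simp [Finset.mem_Icc]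
  have hfe : f (N+1) = f (-N+1) := by
    have := hf (-N+1); rw [show -N+1+2*N = N+1 by ring] at this; exact this
  have e1 := Finset.sum_insert (f := f) hni1
  have e2 := Finset.sum_insert (f := f) hni2
  rw [h1]
  have : f (-N+1) + ∑ ℓ ∈ Finset.Icc (-N+2) (N+1), f ℓ
      = f (N+1) + ∑ ℓ ∈ Finset.Icc (-N+1) N, f ℓ := by
    rw [← e1, ← e2, ← h2, ← h3]
  rw [hfe] at this; linarith

lemma shift_any (N : ℤ) (hN : 1 ≤ N) (f : ℤ → ℝ) (hf : ∀ ℓ, f (ℓ + 2*N) = f ℓ) (c : ℤ) :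
    ∑ ℓ ∈ Finset.Icc (-N+1) N, f (ℓ+c) = ∑ ℓ ∈ Finset.Icc (-N+1) N, f ℓ := by
  induction c using Int.induction_on with
  | zero => simp
  | succ k ih =>
    have hper : ∀ ℓ, (fun x => f (x + (k:ℤ))) (ℓ + 2*N) = (fun x => f (x + (k:ℤ))) ℓ := by
      intro ℓ; simp only []
      rw [show ℓ + 2*N + (k:ℤ) = (ℓ + k) + 2*N by ring, hf]
    have h := shift_one N hN (fun x => f (x + (k:ℤ))) hper
    calc ∑ ℓ ∈ Finset.Icc (-N+1) N, f (ℓ + ((k:ℤ)+1))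
        = ∑ ℓ ∈ Finset.Icc (-N+1) N, f (ℓ + 1 + (k:ℤ)) := by
          apply Finset.sum_congr rfl; intro ℓ _; rw [show ℓ + 1 + (k:ℤ) = ℓ + ((k:ℤ)+1) by ring]
      _ = ∑ ℓ ∈ Finset.Icc (-N+1) N, f (ℓ + (k:ℤ)) := h
      _ = _ := ih
  | pred k ih =>
    have hper : ∀ ℓ, (fun x => f (x + (-(k:ℤ)-1))) (ℓ + 2*N) = (fun x => f (x + (-(k:ℤ)-1))) ℓ := by
      intro ℓ; simp only []
      rw [show ℓ + 2*N + (-(k:ℤ)-1) = (ℓ + (-(k:ℤ)-1)) + 2*N by ring, hf]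
    have h := shift_one N hN (fun x => f (x + (-(k:ℤ)-1))) hper
    have h' : ∑ ℓ ∈ Finset.Icc (-N+1) N, f (ℓ + 1 + (-(k:ℤ)-1))
        = ∑ ℓ ∈ Finset.Icc (-N+1) N, f (ℓ + -(k:ℤ)) := by
      apply Finset.sum_congr rfl; intro ℓ _; rw [show ℓ + 1 + (-(k:ℤ)-1) = ℓ + -(k:ℤ) by ring]
    calc ∑ ℓ ∈ Finset.Icc (-N+1) N, f (ℓ + (-(k:ℤ)-1))
        = ∑ ℓ ∈ Finset.Icc (-N+1) N, f (ℓ + 1 + (-(k:ℤ)-1)) := h.symm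
      _ = ∑ ℓ ∈ Finset.Icc (-N+1) N, f (ℓ + -(k:ℤ)) := h'
      _ = _ := ih

lemma key_shift (N : ℤ) (hN : 1 ≤ N) (v : ℤ → ℝ) (hv : ∀ ℓ, v (ℓ + 2*N) = v ℓ) (c m : ℤ) :
    ∑ ℓ ∈ Finset.Icc (-N+1) N, v (ℓ + c) * v (ℓ + c + m)
      = ∑ ℓ ∈ Finset.Icc (-N+1) N, v ℓ * v (ℓ + m) := by
  have hf : ∀ ℓ, (fun x => v x * v (x + m)) (ℓ + 2*N) = (fun x => v x * v (x + m)) ℓ := by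
    intro ℓ; simp only []
    rw [hv, show ℓ + 2*N + m = (ℓ + m) + 2*N by ring, hv]
  simpa using shift_any N hN (fun x => v x * v (x + m)) hf c

/-- the Fourier-ready representation of `Q^a`. -/
theorem Qa_representation (N : ℤ) (hN : 1 ≤ N)
    (pF p2F rF r2F rrF rr2F g1 g2 : ℝ) (u : ℤ → ℝ) (hu : InU N u) :
    Qa N pF p2F rF r2F rrF rr2F g1 g2 u
    = AFc pF p2F rF r2F rrF rr2F g1 g2 * nrm2 N (Dd N u)
      + (eps N)^2 * BFc p2F rF r2F rr2F g1 g2 * nrm2 N (Dd N (Dd N u))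
      + (eps N)^4 * CFc rF r2F g2 * nrm2 N (Dd N (Dd N (Dd N u)))
      + (eps N)^6 * DFc r2F g2 * nrm2 N (Dd N (Dd N (Dd N (Dd N u)))) := by
  obtain ⟨hper, -⟩ := hu
  set n : ℝ := (N:ℝ) with hn_def
  have hn1 : (1:ℝ) ≤ n := by rw [hn_def]; exact_mod_cast hN
  have hn : n ≠ 0 := by linarith
  have heps : eps N = 1/n := by rw [eps, hn_def]
  have hDd : ∀ (w : ℤ → ℝ) (ℓ : ℤ), Dd N w ℓ = (w ℓ - w (ℓ-1)) * n := by
    intro w ℓ; simp only [Dd, heps]; field_simp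
  simp only [Qa, nrm2]
  set v : ℤ → ℝ := Dd N u with hv
  set I := Finset.Icc (-N+1 : ℤ) N with hI
  have hvper : ∀ ℓ, v (ℓ + 2*N) = v ℓ := by
    intro ℓ
    show (u (ℓ+2*N) - u (ℓ+2*N-1)) / eps N = (u ℓ - u (ℓ-1)) / eps N
    rw [hper, show ℓ+2*N-1 = (ℓ-1)+2*N by ring, hper]
  have key : ∀ c m : ℤ, (∑ ℓ ∈ I, v (ℓ + c) * v (ℓ + c + m)) = ∑ ℓ ∈ I, v ℓ * v (ℓ + m) :=
    fun c m => key_shift N hN v hvper c m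
  set s0 := ∑ ℓ ∈ I, v ℓ * v ℓ with hs0
  set s1 := ∑ ℓ ∈ I, v ℓ * v (ℓ+1) with hs1
  set s2 := ∑ ℓ ∈ I, v ℓ * v (ℓ+2) with hs2
  set s3 := ∑ ℓ ∈ I, v ℓ * v (ℓ+3) with hs3
  have inst0 : ∀ (c : ℤ) (g : ℤ → ℝ), (∀ ℓ, g ℓ = v (ℓ+c) * v (ℓ+c)) →
      ∑ ℓ ∈ I, g ℓ = s0 := by
    intro c g hg
    have h1 : ∀ ℓ ∈ I, g ℓ = v (ℓ+c) * v (ℓ+c+0) := fun ℓ _ => by rw [hg, add_zero]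
    rw [Finset.sum_congr rfl h1, key c 0, hs0]
    exact Finset.sum_congr rfl fun ℓ _ => by rw [add_zero]
  have instm : ∀ (c m : ℤ) (g : ℤ → ℝ), (∀ ℓ, g ℓ = v (ℓ+c) * v (ℓ+c+m)) →
      ∑ ℓ ∈ I, g ℓ = ∑ ℓ ∈ I, v ℓ * v (ℓ+m) := by
    intro c m g hg
    rw [Finset.sum_congr rfl (fun ℓ (_ : ℓ ∈ I) => hg ℓ), key c m]
  have A1 : ∑ ℓ ∈ I, v (ℓ-1) * v (ℓ-1) = s0 :=
    inst0 (-1) _ (fun ℓ => by rw [show ℓ + (-1:ℤ) = ℓ - 1 by ring])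
  have A2 : ∑ ℓ ∈ I, v (ℓ+1) * v (ℓ+1) = s0 := inst0 1 _ (fun ℓ => rfl)
  have A3 : ∑ ℓ ∈ I, v (ℓ+2) * v (ℓ+2) = s0 := inst0 2 _ (fun ℓ => rfl)
  have B1 : ∑ ℓ ∈ I, v (ℓ-2) * v (ℓ-2) = s0 :=
    inst0 (-2) _ (fun ℓ => by rw [show ℓ + (-2:ℤ) = ℓ - 2 by ring])
  have B2 : ∑ ℓ ∈ I, v (ℓ-3) * v (ℓ-3) = s0 :=
    inst0 (-3) _ (fun ℓ => by rw [show ℓ + (-3:ℤ) = ℓ - 3 by ring])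
  have A4 : ∑ ℓ ∈ I, v (ℓ-1) * v ℓ = s1 := by
    rw [hs1]
    exact instm (-1) 1 _ (fun ℓ => by
      rw [show ℓ + (-1:ℤ) = ℓ - 1 by ring, show ℓ - 1 + 1 = ℓ by ring])
  have A5 : ∑ ℓ ∈ I, v (ℓ+1) * v (ℓ+2) = s1 := by
    rw [hs1]
    exact instm 1 1 _ (fun ℓ => by rw [show ℓ + (1:ℤ) + 1 = ℓ + 2 by ring])
  have B3 : ∑ ℓ ∈ I, v (ℓ-2) * v (ℓ-1) = s1 := by
    rw [hs1]
    exact instm (-2) 1 _ (fun ℓ => by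
      rw [show ℓ + (-2:ℤ) = ℓ - 2 by ring, show ℓ - 2 + 1 = ℓ - 1 by ring])
  have B4 : ∑ ℓ ∈ I, v (ℓ-3) * v (ℓ-2) = s1 := by
    rw [hs1]
    exact instm (-3) 1 _ (fun ℓ => by
      rw [show ℓ + (-3:ℤ) = ℓ - 3 by ring, show ℓ - 3 + 1 = ℓ - 2 by ring])
  have A6 : ∑ ℓ ∈ I, v (ℓ-1) * v (ℓ+1) = s2 := by
    rw [hs2]
    exact instm (-1) 2 _ (fun ℓ => by
      rw [show ℓ + (-1:ℤ) = ℓ - 1 by ring, show ℓ - 1 + 2 = ℓ + 1 by ring])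
  have B5 : ∑ ℓ ∈ I, v (ℓ-2) * v ℓ = s2 := by
    rw [hs2]
    exact instm (-2) 2 _ (fun ℓ => by
      rw [show ℓ + (-2:ℤ) = ℓ - 2 by ring, show ℓ - 2 + 2 = ℓ by ring])
  have B6 : ∑ ℓ ∈ I, v (ℓ-3) * v (ℓ-1) = s2 := by
    rw [hs2]
    exact instm (-3) 2 _ (fun ℓ => by
      rw [show ℓ + (-3:ℤ) = ℓ - 3 by ring, show ℓ - 3 + 2 = ℓ - 1 by ring])
  have A8 : ∑ ℓ ∈ I, v (ℓ-1) * v (ℓ+2) = s3 := by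
    rw [hs3]
    exact instm (-1) 3 _ (fun ℓ => by
      rw [show ℓ + (-1:ℤ) = ℓ - 1 by ring, show ℓ - 1 + 3 = ℓ + 2 by ring])
  have B7 : ∑ ℓ ∈ I, v (ℓ-3) * v ℓ = s3 := by
    rw [hs3]
    exact instm (-3) 3 _ (fun ℓ => by
      rw [show ℓ + (-3:ℤ) = ℓ - 3 by ring, show ℓ - 3 + 3 = ℓ by ring])
  have E0 : ∑ ℓ ∈ I, (v ℓ)^2 = s0 := by
    rw [hs0]; exact Finset.sum_congr rfl fun ℓ _ => by rw [pow_two]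
  have E1 : ∑ ℓ ∈ I, (Dd N v ℓ)^2 = n^2 * (2*s0 - 2*s1) := by
    have h2 : ∀ ℓ ∈ I, (Dd N v ℓ)^2
        = n^2 * (v ℓ * v ℓ) + n^2 * (v (ℓ-1) * v (ℓ-1)) + (-(2*n^2)) * (v (ℓ-1) * v ℓ) := by
      intro ℓ _; rw [hDd v ℓ]; ring
    rw [Finset.sum_congr rfl h2]
    simp only [Finset.sum_add_distrib]
    simp only [← Finset.mul_sum]
    rw [A1, A4, ← hs0]
    ring
  have E2 : ∑ ℓ ∈ I, (Dd N (Dd N v) ℓ)^2 = n^4 * (6*s0 - 8*s1 + 2*s2) := by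
    have h3 : ∀ ℓ ∈ I, (Dd N (Dd N v) ℓ)^2
        = n^4 * (v ℓ * v ℓ) + (4*n^4) * (v (ℓ-1) * v (ℓ-1)) + n^4 * (v (ℓ-2) * v (ℓ-2))
          + (-(4*n^4)) * (v (ℓ-1) * v ℓ) + (-(4*n^4)) * (v (ℓ-2) * v (ℓ-1))
          + (2*n^4) * (v (ℓ-2) * v ℓ) := by
      intro ℓ _
      simp only [hDd]
      rw [show ℓ-1-1 = ℓ-2 by ring]
      ring
    rw [Finset.sum_congr rfl h3]
    simp only [Finset.sum_add_distrib]
    simp only [← Finset.mul_sum]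
    rw [A1, A4, B1, B3, B5, ← hs0]
    ring
  have E3 : ∑ ℓ ∈ I, (Dd N (Dd N (Dd N v)) ℓ)^2
      = n^6 * (20*s0 - 30*s1 + 12*s2 - 2*s3) := by
    have h4 : ∀ ℓ ∈ I, (Dd N (Dd N (Dd N v)) ℓ)^2
        = n^6 * (v ℓ * v ℓ) + (9*n^6) * (v (ℓ-1) * v (ℓ-1)) + (9*n^6) * (v (ℓ-2) * v (ℓ-2))
          + n^6 * (v (ℓ-3) * v (ℓ-3))
          + (-(6*n^6)) * (v (ℓ-1) * v ℓ) + (-(18*n^6)) * (v (ℓ-2) * v (ℓ-1))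
          + (-(6*n^6)) * (v (ℓ-3) * v (ℓ-2))
          + (6*n^6) * (v (ℓ-2) * v ℓ) + (6*n^6) * (v (ℓ-3) * v (ℓ-1))
          + (-(2*n^6)) * (v (ℓ-3) * v ℓ) := by
      intro ℓ _
      simp only [hDd]
      rw [show ℓ-1-1 = ℓ-2 by ring, show ℓ-2-1 = ℓ-3 by ring]
      ring
    rw [Finset.sum_congr rfl h4]
    simp only [Finset.sum_add_distrib]
    simp only [← Finset.mul_sum]
    rw [A1, A4, B1, B2, B3, B4, B5, B6, B7, ← hs0]
    ring
  have EQ : ∑ ℓ ∈ I,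
      (g2 * (rF * (v ℓ + v (ℓ+1))
          + r2F * (v (ℓ-1) + v ℓ + v (ℓ+1) + v (ℓ+2)))^2
       + g1 * (rrF * (v ℓ)^2 + rr2F * (v ℓ + v (ℓ-1))^2
             + rrF * (v (ℓ+1))^2 + rr2F * (v (ℓ+1) + v (ℓ+2))^2)
       + (1/2) * (pF * ((v ℓ)^2 + (v (ℓ+1))^2)
             + p2F * ((v ℓ + v (ℓ-1))^2 + (v (ℓ+1) + v (ℓ+2))^2)))
      = (2*g2*r2F^2 + 2*g2*(rF+r2F)^2 + 2*g1*(rrF + 2*rr2F) + pF + 2*p2F) * s0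
        + (2*g2*(rF+r2F)^2 + 4*g2*(rF+r2F)*r2F + 4*g1*rr2F + 2*p2F) * s1
        + (4*g2*(rF+r2F)*r2F) * s2 + (2*g2*r2F^2) * s3 := by
    have hF : ∀ ℓ ∈ I,
        (g2 * (rF * (v ℓ + v (ℓ+1))
            + r2F * (v (ℓ-1) + v ℓ + v (ℓ+1) + v (ℓ+2)))^2
         + g1 * (rrF * (v ℓ)^2 + rr2F * (v ℓ + v (ℓ-1))^2
               + rrF * (v (ℓ+1))^2 + rr2F * (v (ℓ+1) + v (ℓ+2))^2)
         + (1/2) * (pF * ((v ℓ)^2 + (v (ℓ+1))^2)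
               + p2F * ((v ℓ + v (ℓ-1))^2 + (v (ℓ+1) + v (ℓ+2))^2)))
        = (g2*r2F^2 + g1*rr2F + p2F/2) * (v (ℓ-1) * v (ℓ-1))
          + (g2*(rF+r2F)^2 + g1*(rrF+rr2F) + (pF+p2F)/2) * (v ℓ * v ℓ)
          + (g2*(rF+r2F)^2 + g1*(rrF+rr2F) + (pF+p2F)/2) * (v (ℓ+1) * v (ℓ+1))
          + (g2*r2F^2 + g1*rr2F + p2F/2) * (v (ℓ+2) * v (ℓ+2))
          + (2*g2*(rF+r2F)*r2F + 2*g1*rr2F + p2F) * (v (ℓ-1) * v ℓ)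
          + (2*g2*(rF+r2F)^2) * (v ℓ * v (ℓ+1))
          + (2*g2*(rF+r2F)*r2F + 2*g1*rr2F + p2F) * (v (ℓ+1) * v (ℓ+2))
          + (2*g2*(rF+r2F)*r2F) * (v (ℓ-1) * v (ℓ+1))
          + (2*g2*(rF+r2F)*r2F) * (v ℓ * v (ℓ+2))
          + (2*g2*r2F^2) * (v (ℓ-1) * v (ℓ+2)) := by
      intro ℓ _; ring
    rw [Finset.sum_congr rfl hF]
    simp only [Finset.sum_add_distrib]
    simp only [← Finset.mul_sum]
    rw [A1, A2, A3, A4, A5, A6, A8, ← hs0, ← hs1, ← hs2]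
    ring
  rw [EQ, E0, E1, E2, E3]
  simp only [AFc, Ahat, Atil, BFc, CFc, DFc, heps]
  field_simp
  ring
end
end

section
/- For every integer k with 1 ≤ k ≤ N there exists a unique u ∈ U such that Du_ℓ = sin(kπℓ/N) for all ℓ ∈ ℤ, and this u satisfies Q^a(u) = λ_F(4 sin²(kπ/(2N))) · ‖Du‖²_{ℓ²ε}. -/
open Finset

noncomputable section

/- ---------- auxiliary lemmas ---------- -/

lemma sum_reindex_add (a b c : ℤ) (g : ℤ → ℝ) :
    ∑ ℓ ∈ Finset.Icc a b, g (ℓ + c) = ∑ ℓ ∈ Finset.Icc (a+c) (b+c), g ℓ := by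
  rw [← Finset.map_add_right_Icc, Finset.sum_map]; rfl

lemma sum_Icc_top (a b : ℤ) (h : a ≤ b) (f : ℤ → ℝ) :
    ∑ ℓ ∈ Finset.Icc a b, f ℓ = (∑ ℓ ∈ Finset.Icc a (b-1), f ℓ) + f b := by
  have : Finset.Icc a b = insert b (Finset.Icc a (b-1)) := by
    ext x; simp only [Finset.mem_Icc, Finset.mem_insert]; omega
  rw [this, Finset.sum_insert (by simp only [Finset.mem_Icc]; omega)]; ring

lemma sum_Icc_bot (a b : ℤ) (h : a ≤ b) (f : ℤ → ℝ) :
    ∑ ℓ ∈ Finset.Icc a b, f ℓ = f a + ∑ ℓ ∈ Finset.Icc (a+1) b, f ℓ := by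
  have : Finset.Icc a b = insert a (Finset.Icc (a+1) b) := by
    ext x; simp only [Finset.mem_Icc, Finset.mem_insert]; omega
  rw [this, Finset.sum_insert (by simp only [Finset.mem_Icc]; omega)]

lemma sum_odd_symm (M : ℤ) (f : ℤ → ℝ) (hf : ∀ ℓ, f (-ℓ) = - f ℓ) :
    ∑ ℓ ∈ Finset.Icc (-M) M, f ℓ = 0 := by
  exact Finset.sum_involution (fun a _ => -a)
    (fun a _ => by rw [hf]; ring)
    (fun a _ hfa h => by
      have h' : -a = a := h
      have ha0 : a = 0 := by omega
      subst ha0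
      have h0 : f (-(0:ℤ)) = - f 0 := hf 0
      simp only [neg_zero] at h0
      exact hfa (by linarith))
    (fun a ha => by simp only [Finset.mem_Icc] at ha ⊢; omega)
    (fun a _ => by ring)

lemma sum_odd_window (N : ℤ) (hN : 1 ≤ N) (f : ℤ → ℝ) (hf : ∀ ℓ, f (-ℓ) = - f ℓ)
    (hfN : f N = 0) : ∑ ℓ ∈ Finset.Icc (-N+1) N, f ℓ = 0 := by
  rw [sum_Icc_top _ _ (by omega) f, hfN, add_zero]
  have h : (-N+1 : ℤ) = -(N-1) := by ring
  rw [h]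
  exact sum_odd_symm (N-1) f hf

lemma sum_shift_one (N : ℤ) (hN : 1 ≤ N) (g : ℤ → ℝ) (hg : ∀ ℓ, g (ℓ + 2*N) = g ℓ) :
    ∑ ℓ ∈ Finset.Icc (-N+1) N, g (ℓ + 1) = ∑ ℓ ∈ Finset.Icc (-N+1) N, g ℓ := by
  rw [sum_reindex_add]
  rw [sum_Icc_top (-N+1+1) (N+1) (by omega) g, show N+1-1 = N from by ring]
  rw [sum_Icc_bot (-N+1) N (by omega) g]
  have hper : g (N+1) = g (-N+1) := by
    have := hg (-N+1)
    rw [show -N+1+2*N = N+1 from by ring] at this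
    exact this
  rw [hper]; ring

lemma sum_shift (N : ℤ) (hN : 1 ≤ N) (g : ℤ → ℝ) (hg : ∀ ℓ, g (ℓ + 2*N) = g ℓ) (a : ℤ) :
    ∑ ℓ ∈ Finset.Icc (-N+1) N, g (ℓ + a) = ∑ ℓ ∈ Finset.Icc (-N+1) N, g ℓ := by
  induction a using Int.induction_on with
  | zero => simp
  | succ n ih =>
      have h1 := sum_shift_one N hN (fun t => g (t + n)) (fun ℓ => by
        rw [show ℓ + 2*N + (n:ℤ) = (ℓ + n) + 2*N from by ring, hg])
      calc ∑ ℓ ∈ Finset.Icc (-N+1) N, g (ℓ + ((n:ℤ)+1))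
          = ∑ ℓ ∈ Finset.Icc (-N+1) N, g ((ℓ+1) + (n:ℤ)) := by
            apply Finset.sum_congr rfl; intro ℓ _; rw [show ℓ + ((n:ℤ)+1) = (ℓ+1) + n from by ring]
        _ = ∑ ℓ ∈ Finset.Icc (-N+1) N, g (ℓ + (n:ℤ)) := h1
        _ = _ := ih
  | pred n ih =>
      have h1 := sum_shift_one N hN (fun t => g (t + (-(n:ℤ)-1))) (fun ℓ => by
        rw [show ℓ + 2*N + (-(n:ℤ)-1) = (ℓ + (-(n:ℤ)-1)) + 2*N from by ring, hg])
      have h2 : ∑ ℓ ∈ Finset.Icc (-N+1) N, g ((ℓ+1) + (-(n:ℤ)-1))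
          = ∑ ℓ ∈ Finset.Icc (-N+1) N, g (ℓ + (-(n:ℤ))) := by
        apply Finset.sum_congr rfl; intro ℓ _; rw [show (ℓ+1) + (-(n:ℤ)-1) = ℓ + (-(n:ℤ)) from by ring]
      rw [← h1, h2, ih]

/-- existence of an antiderivative in `U` for a periodic mean-zero sequence. -/
lemma exists_antideriv (N : ℤ) (hN : 1 ≤ N) (f : ℤ → ℝ) (hper : ∀ ℓ, f (ℓ + 2*N) = f ℓ)
    (hzero : ∑ ℓ ∈ Finset.Icc (-N+1) N, f ℓ = 0) :
    ∃ u : ℤ → ℝ, InU N u ∧ ∀ ℓ, Dd N u ℓ = f ℓ := by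
  have hNR : (0:ℝ) < (N:ℝ) := by exact_mod_cast (by omega : (0:ℤ) < N)
  have hεne : eps N ≠ 0 := by
    simp only [eps]
    positivity
  set F : ℤ → ℝ := fun ℓ => eps N * ((∑ j ∈ Finset.Icc 1 ℓ, f j) - ∑ j ∈ Finset.Icc (ℓ+1) 0, f j)
    with hF
  have hDF : ∀ ℓ : ℤ, F ℓ - F (ℓ-1) = eps N * f ℓ := by
    intro ℓ
    rcases le_or_gt 1 ℓ with h | h
    · have e1 : Finset.Icc (ℓ+1) 0 = (∅ : Finset ℤ) := Finset.Icc_eq_empty (by omega)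
      have e2 : Finset.Icc (ℓ-1+1) 0 = (∅ : Finset ℤ) := Finset.Icc_eq_empty (by omega)
      have e3 : ∑ j ∈ Finset.Icc 1 ℓ, f j = (∑ j ∈ Finset.Icc 1 (ℓ-1), f j) + f ℓ :=
        sum_Icc_top 1 ℓ h f
      simp only [hF, e1, e2, e3, Finset.sum_empty]
      ring
    · have e1 : Finset.Icc 1 ℓ = (∅ : Finset ℤ) := Finset.Icc_eq_empty (by omega)
      have e2 : Finset.Icc 1 (ℓ-1) = (∅ : Finset ℤ) := Finset.Icc_eq_empty (by omega)
      have e3 : ∑ j ∈ Finset.Icc (ℓ-1+1) 0, f j = f ℓ + ∑ j ∈ Finset.Icc (ℓ+1) 0, f j := by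
        rw [show ℓ-1+1 = ℓ from by ring]
        exact sum_Icc_bot ℓ 0 (by omega) f
      simp only [hF, e1, e2, e3, Finset.sum_empty]
      ring
  -- periodicity of F
  have hgstep : ∀ ℓ : ℤ, F (ℓ + 2*N) - F ℓ = F (ℓ - 1 + 2*N) - F (ℓ-1) := by
    intro ℓ
    have h1 := hDF (ℓ + 2*N)
    rw [show ℓ + 2*N - 1 = ℓ - 1 + 2*N from by ring, hper ℓ] at h1
    have h2 := hDF ℓ
    linarith
  have hgconst : ∀ ℓ : ℤ, F (ℓ + 2*N) - F ℓ = F (0 + 2*N) - F 0 := by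
    intro ℓ
    induction ℓ using Int.induction_on with
    | zero => rfl
    | succ n ih =>
        have := hgstep ((n:ℤ)+1)
        rw [show (n:ℤ)+1-1 = (n:ℤ) from by ring] at this
        rw [this, ih]
    | pred n ih =>
        have := hgstep (-(n:ℤ))
        rw [show -(n:ℤ)-1 = (-(n:ℤ)-1) from rfl] at this
        rw [← this, ih]
  have hF0 : F 0 = 0 := by
    simp only [hF]
    rw [show (0:ℤ)+1 = 1 from rfl]
    simp
  have hF2N : F (0 + 2*N) = 0 := by
    have e1 : Finset.Icc (0+2*N+1) 0 = (∅ : Finset ℤ) := Finset.Icc_eq_empty (by omega)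
    have e2 : ∑ j ∈ Finset.Icc 1 (0+2*N), f j = 0 := by
      have h3 : ∑ ℓ ∈ Finset.Icc (-N+1) N, f (ℓ + N) = ∑ j ∈ Finset.Icc (-N+1+N) (N+N), f j :=
        sum_reindex_add _ _ _ f
      have h4 := sum_shift N hN f hper N
      rw [show (-N+1+N) = 1 from by ring, show N+N = 2*N from by ring] at h3
      rw [show (0:ℤ)+2*N = 2*N from by ring, ← h3, h4, hzero]
    simp only [hF, e1, e2, Finset.sum_empty]
    ring
  have hFper : IsPer N F := by
    intro ℓ
    have := hgconst ℓ
    rw [hF0, hF2N] at this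
    linarith
  -- subtract the mean
  set m : ℝ := (∑ ℓ ∈ Finset.Icc (-N+1) N, F ℓ) / (2*(N:ℝ)) with hm
  refine ⟨fun ℓ => F ℓ - m, ⟨fun ℓ => by simp only []; rw [hFper ℓ], ?_⟩, ?_⟩
  · have hcard : (Finset.Icc (-N+1) N).card = (2*N).toNat := by
      rw [Int.card_Icc]
      congr 1
      omega
    rw [Finset.sum_sub_distrib, Finset.sum_const, hcard]
    have hc : ((2*N).toNat : ℝ) = 2*(N:ℝ) := by
      have : ((2*N).toNat : ℤ) = 2*N := Int.toNat_of_nonneg (by omega)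
      exact_mod_cast congrArg (fun z : ℤ => (z:ℝ)) this
    rw [nsmul_eq_mul, hc, hm]
    field_simp
    ring
  · intro ℓ
    simp only [Dd]
    rw [show F ℓ - m - (F (ℓ-1) - m) = F ℓ - F (ℓ-1) from by ring, hDF ℓ]
    field_simp

lemma antideriv_unique (N : ℤ) (hN : 1 ≤ N) (u v : ℤ → ℝ) (hu : InU N u) (hv : InU N v)
    (hD : ∀ ℓ, Dd N u ℓ = Dd N v ℓ) : u = v := by
  have hNR : (0:ℝ) < (N:ℝ) := by exact_mod_cast (by omega : (0:ℤ) < N)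
  have hεne : eps N ≠ 0 := by simp only [eps]; positivity
  have hstep : ∀ ℓ : ℤ, u ℓ - v ℓ = u (ℓ-1) - v (ℓ-1) := by
    intro ℓ
    have h := hD ℓ
    simp only [Dd, div_eq_div_iff hεne hεne] at h
    have h2 : u ℓ - u (ℓ-1) = v ℓ - v (ℓ-1) := by
      have := mul_right_cancel₀ hεne h
      linarith
    linarith
  have hconst : ∀ ℓ : ℤ, u ℓ - v ℓ = u 0 - v 0 := by
    intro ℓ
    induction ℓ using Int.induction_on with
    | zero => rfl
    | succ n ih =>
        have := hstep ((n:ℤ)+1)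
        rw [show (n:ℤ)+1-1 = (n:ℤ) from by ring] at this
        rw [this, ih]
    | pred n ih =>
        have := hstep (-(n:ℤ))
        rw [← this, ih]
  have hsum : ∑ ℓ ∈ Finset.Icc (-N+1) N, (u ℓ - v ℓ) = 0 := by
    rw [Finset.sum_sub_distrib, hu.2, hv.2]; ring
  have hcard : (Finset.Icc (-N+1) N).card = (2*N).toNat := by
    rw [Int.card_Icc]; congr 1; omega
  have hc : ((2*N).toNat : ℝ) = 2*(N:ℝ) := by
    have : ((2*N).toNat : ℤ) = 2*N := Int.toNat_of_nonneg (by omega)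
    exact_mod_cast congrArg (fun z : ℤ => (z:ℝ)) this
  have hsum2 : ∑ ℓ ∈ Finset.Icc (-N+1) N, (u ℓ - v ℓ) = (2*(N:ℝ)) * (u 0 - v 0) := by
    rw [Finset.sum_congr rfl (fun ℓ _ => hconst ℓ), Finset.sum_const, hcard, nsmul_eq_mul, hc]
  have h0 : u 0 - v 0 = 0 := by
    rw [hsum2] at hsum
    have h2N : (2*(N:ℝ)) ≠ 0 := by positivity
    exact (mul_eq_zero.mp hsum).resolve_left h2N
  funext ℓ
  have := hconst ℓ
  rw [h0] at this
  linarith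

/-- existence/uniqueness of the Fourier eigenmode and its Rayleigh quotient. -/
theorem fourier_mode_eigenvalue (N : ℤ) (hN : 1 ≤ N)
    (pF p2F rF r2F rrF rr2F g1 g2 : ℝ) (k : ℤ) (hk1 : 1 ≤ k) (hkN : k ≤ N) :
    (∃! u : ℤ → ℝ, InU N u ∧
      ∀ ℓ : ℤ, Dd N u ℓ = Real.sin ((k:ℝ) * Real.pi * (ℓ:ℝ) / (N:ℝ))) ∧
    (∀ u : ℤ → ℝ, InU N u →
      (∀ ℓ : ℤ, Dd N u ℓ = Real.sin ((k:ℝ) * Real.pi * (ℓ:ℝ) / (N:ℝ))) →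
      Qa N pF p2F rF r2F rrF rr2F g1 g2 u
        = lamF pF p2F rF r2F rrF rr2F g1 g2
            (4 * Real.sin ((k:ℝ) * Real.pi / (2*(N:ℝ)))^2) * nrm2 N (Dd N u)) := by
  have hNR : (0:ℝ) < (N:ℝ) := by exact_mod_cast (by omega : (0:ℤ) < N)
  have hNne : (N:ℝ) ≠ 0 := ne_of_gt hNR
  set θ : ℝ := (k:ℝ) * Real.pi / (N:ℝ) with hθ
  set f : ℤ → ℝ := fun ℓ => Real.sin (θ * (ℓ:ℝ)) with hf
  have hfeq : ∀ ℓ : ℤ, Real.sin ((k:ℝ) * Real.pi * (ℓ:ℝ) / (N:ℝ)) = f ℓ := by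
    intro ℓ; simp only [hf, hθ]; congr 1; ring
  have hfN : f N = 0 := by
    simp only [hf]
    rw [show θ * (N:ℝ) = (k:ℝ) * Real.pi from by rw [hθ]; field_simp]
    exact Real.sin_int_mul_pi k
  have hodd : ∀ ℓ : ℤ, f (-ℓ) = - f ℓ := by
    intro ℓ
    simp only [hf, Int.cast_neg, mul_neg, Real.sin_neg]
  have hper : ∀ ℓ : ℤ, f (ℓ + 2*N) = f ℓ := by
    intro ℓ
    simp only [hf]
    rw [show θ * ((ℓ + 2*N : ℤ):ℝ) = θ * (ℓ:ℝ) + (k:ℝ) * (2 * Real.pi) from by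
      push_cast; rw [hθ]; field_simp]
    exact Real.sin_add_int_mul_two_pi _ k
  have hzero : ∑ ℓ ∈ Finset.Icc (-N+1) N, f ℓ = 0 := sum_odd_window N hN f hodd hfN
  obtain ⟨u0, hu0, hD0⟩ := exists_antideriv N hN f hper hzero
  constructor
  · refine ⟨u0, ⟨hu0, fun ℓ => by rw [hfeq ℓ]; exact hD0 ℓ⟩, ?_⟩
    intro v ⟨hv, hDv⟩
    exact antideriv_unique N hN v u0 hv hu0 (fun ℓ => by rw [hD0 ℓ, hDv ℓ, hfeq ℓ])
  · intro u hu hDu'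
    have hDu : ∀ ℓ : ℤ, Dd N u ℓ = f ℓ := fun ℓ => by rw [hDu' ℓ, hfeq ℓ]
    set I := Finset.Icc (-N+1) N with hI
    set S : ℝ := ∑ ℓ ∈ I, f ℓ * f ℓ with hS
    -- cross sum vanishes
    have hT : ∑ ℓ ∈ I, f ℓ * Real.cos (θ * (ℓ:ℝ)) = 0 := by
      apply sum_odd_window N hN _ _ _
      · intro ℓ
        simp only [hf, Int.cast_neg, mul_neg, Real.sin_neg, Real.cos_neg]
        ring
      · rw [hfN]; ring
    -- addition formula
    have hadd : ∀ ℓ m : ℤ, f (ℓ + m)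
        = f ℓ * Real.cos (θ * (m:ℝ)) + Real.cos (θ * (ℓ:ℝ)) * Real.sin (θ * (m:ℝ)) := by
      intro ℓ m
      simp only [hf]
      rw [show θ * ((ℓ + m : ℤ):ℝ) = θ * (ℓ:ℝ) + θ * (m:ℝ) from by push_cast; ring]
      exact Real.sin_add _ _
    -- correlation sums
    have hPab : ∀ a b : ℤ, ∑ ℓ ∈ I, f (ℓ + a) * f (ℓ + b)
        = Real.cos (θ * ((b - a : ℤ):ℝ)) * S := by
      intro a b
      have hgper : ∀ ℓ : ℤ, f (ℓ + 2*N) * f ((ℓ + (b-a)) + 2*N) = f ℓ * f (ℓ + (b-a)) := by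
        intro ℓ; rw [hper, hper]
      have step1 : ∑ ℓ ∈ I, f (ℓ + a) * f (ℓ + b)
          = ∑ ℓ ∈ I, (fun t => f t * f (t + (b-a))) (ℓ + a) := by
        apply Finset.sum_congr rfl
        intro ℓ _
        simp only []
        rw [show ℓ + a + (b - a) = ℓ + b from by ring]
      have step2 : ∑ ℓ ∈ I, (fun t => f t * f (t + (b-a))) (ℓ + a)
          = ∑ ℓ ∈ I, f ℓ * f (ℓ + (b-a)) := by
        rw [hI]
        exact sum_shift N hN (fun t => f t * f (t + (b-a))) (fun ℓ => by
          rw [hper, show ℓ + 2*N + (b-a) = (ℓ + (b-a)) + 2*N from by ring, hper]) a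
      have step3 : ∑ ℓ ∈ I, f ℓ * f (ℓ + (b-a))
          = Real.cos (θ * ((b - a : ℤ):ℝ)) * S := by
        calc ∑ ℓ ∈ I, f ℓ * f (ℓ + (b-a))
            = ∑ ℓ ∈ I, (Real.cos (θ * ((b - a : ℤ):ℝ)) * (f ℓ * f ℓ)
              + Real.sin (θ * ((b - a : ℤ):ℝ)) * (f ℓ * Real.cos (θ * (ℓ:ℝ)))) := by
              apply Finset.sum_congr rfl
              intro ℓ _
              rw [hadd ℓ (b-a)]
              ring
          _ = Real.cos (θ * ((b - a : ℤ):ℝ)) * S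
              + Real.sin (θ * ((b - a : ℤ):ℝ)) * ∑ ℓ ∈ I, f ℓ * Real.cos (θ * (ℓ:ℝ)) := by
              rw [Finset.sum_add_distrib, ← Finset.mul_sum, ← Finset.mul_sum, hS]
          _ = Real.cos (θ * ((b - a : ℤ):ℝ)) * S := by rw [hT]; ring
      rw [step1, step2, step3]
    -- specialized correlation sums
    have hS1 : ∑ ℓ ∈ I, f (ℓ-1) * f (ℓ-1) = S := by
      have h := hPab (-1) (-1)
      norm_num at h
      rw [← h]
      apply Finset.sum_congr rfl
      intro ℓ _
      rw [show ℓ + (-1:ℤ) = ℓ - 1 from by ring]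
    have hS3 : ∑ ℓ ∈ I, f (ℓ+1) * f (ℓ+1) = S := by
      have h := hPab 1 1
      norm_num at h
      exact h
    have hS4 : ∑ ℓ ∈ I, f (ℓ+2) * f (ℓ+2) = S := by
      have h := hPab 2 2
      norm_num at h
      exact h
    have hC1a : ∑ ℓ ∈ I, f (ℓ-1) * f ℓ = Real.cos θ * S := by
      have h := hPab (-1) 0
      norm_num at h
      rw [← h]
      apply Finset.sum_congr rfl
      intro ℓ _
      rw [show ℓ + (-1:ℤ) = ℓ - 1 from by ring]
    have hC1b : ∑ ℓ ∈ I, f ℓ * f (ℓ+1) = Real.cos θ * S := by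
      have h := hPab 0 1
      norm_num at h
      exact h
    have hC1c : ∑ ℓ ∈ I, f (ℓ+1) * f (ℓ+2) = Real.cos θ * S := by
      have h := hPab 1 2
      norm_num at h
      exact h
    have hC2a : ∑ ℓ ∈ I, f (ℓ-1) * f (ℓ+1) = Real.cos (θ * 2) * S := by
      have h := hPab (-1) 1
      norm_num at h
      rw [← h]
      apply Finset.sum_congr rfl
      intro ℓ _
      rw [show ℓ + (-1:ℤ) = ℓ - 1 from by ring]
    have hC2b : ∑ ℓ ∈ I, f ℓ * f (ℓ+2) = Real.cos (θ * 2) * S := by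
      have h := hPab 0 2
      norm_num at h
      exact h
    have hC3 : ∑ ℓ ∈ I, f (ℓ-1) * f (ℓ+2) = Real.cos (θ * 3) * S := by
      have h := hPab (-1) 2
      norm_num at h
      rw [← h]
      apply Finset.sum_congr rfl
      intro ℓ _
      rw [show ℓ + (-1:ℤ) = ℓ - 1 from by ring]
    -- coefficients
    set K0a : ℝ := g2*r2F^2 + g1*rr2F + p2F/2 with hK0a
    set K0b : ℝ := g2*(rF+r2F)^2 + g1*(rrF+rr2F) + pF/2 + p2F/2 with hK0b
    set Kab : ℝ := 2*g2*(rF+r2F)*r2F + 2*g1*rr2F + p2F with hKab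
    set Kbc : ℝ := 2*g2*(rF+r2F)^2 with hKbc
    set Kac : ℝ := 2*g2*(rF+r2F)*r2F with hKac
    set Kad : ℝ := 2*g2*r2F^2 with hKad
    set K : ℝ := (2*K0a + 2*K0b) + (2*Kab + Kbc) * Real.cos θ
      + (2*Kac) * Real.cos (θ*2) + Kad * Real.cos (θ*3) with hK
    have hQsum : (∑ ℓ ∈ I,
        (g2 * (rF * (Dd N u ℓ + Dd N u (ℓ+1))
            + r2F * (Dd N u (ℓ-1) + Dd N u ℓ + Dd N u (ℓ+1) + Dd N u (ℓ+2)))^2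
         + g1 * (rrF * (Dd N u ℓ)^2 + rr2F * (Dd N u ℓ + Dd N u (ℓ-1))^2
               + rrF * (Dd N u (ℓ+1))^2 + rr2F * (Dd N u (ℓ+1) + Dd N u (ℓ+2))^2)
         + (1/2) * (pF * ((Dd N u ℓ)^2 + (Dd N u (ℓ+1))^2)
               + p2F * ((Dd N u ℓ + Dd N u (ℓ-1))^2 + (Dd N u (ℓ+1) + Dd N u (ℓ+2))^2))))
        = K * S := by
      calc (∑ ℓ ∈ I,
        (g2 * (rF * (Dd N u ℓ + Dd N u (ℓ+1))
            + r2F * (Dd N u (ℓ-1) + Dd N u ℓ + Dd N u (ℓ+1) + Dd N u (ℓ+2)))^2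
         + g1 * (rrF * (Dd N u ℓ)^2 + rr2F * (Dd N u ℓ + Dd N u (ℓ-1))^2
               + rrF * (Dd N u (ℓ+1))^2 + rr2F * (Dd N u (ℓ+1) + Dd N u (ℓ+2))^2)
         + (1/2) * (pF * ((Dd N u ℓ)^2 + (Dd N u (ℓ+1))^2)
               + p2F * ((Dd N u ℓ + Dd N u (ℓ-1))^2 + (Dd N u (ℓ+1) + Dd N u (ℓ+2))^2))))
          = ∑ ℓ ∈ I,
            (K0a * (f (ℓ-1) * f (ℓ-1)) + K0b * (f ℓ * f ℓ) + K0b * (f (ℓ+1) * f (ℓ+1))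
             + K0a * (f (ℓ+2) * f (ℓ+2))
             + Kab * (f (ℓ-1) * f ℓ) + Kbc * (f ℓ * f (ℓ+1)) + Kab * (f (ℓ+1) * f (ℓ+2))
             + Kac * (f (ℓ-1) * f (ℓ+1)) + Kac * (f ℓ * f (ℓ+2)) + Kad * (f (ℓ-1) * f (ℓ+2))) := by
            apply Finset.sum_congr rfl
            intro ℓ _
            rw [hDu ℓ, hDu (ℓ+1), hDu (ℓ-1), hDu (ℓ+2), hK0a, hK0b, hKab, hKbc, hKac, hKad]
            ring
        _ = K0a * (∑ ℓ ∈ I, f (ℓ-1) * f (ℓ-1)) + K0b * (∑ ℓ ∈ I, f ℓ * f ℓ)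
             + K0b * (∑ ℓ ∈ I, f (ℓ+1) * f (ℓ+1)) + K0a * (∑ ℓ ∈ I, f (ℓ+2) * f (ℓ+2))
             + Kab * (∑ ℓ ∈ I, f (ℓ-1) * f ℓ) + Kbc * (∑ ℓ ∈ I, f ℓ * f (ℓ+1))
             + Kab * (∑ ℓ ∈ I, f (ℓ+1) * f (ℓ+2))
             + Kac * (∑ ℓ ∈ I, f (ℓ-1) * f (ℓ+1)) + Kac * (∑ ℓ ∈ I, f ℓ * f (ℓ+2))
             + Kad * (∑ ℓ ∈ I, f (ℓ-1) * f (ℓ+2)) := by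
            simp only [Finset.sum_add_distrib, Finset.mul_sum]
        _ = K * S := by
            rw [hS1, ← hS, hS3, hS4, hC1a, hC1b, hC1c, hC2a, hC2b, hC3, hK]
            ring
    -- the norm
    have hnrm : nrm2 N (Dd N u) = eps N * S := by
      simp only [nrm2, hS]
      congr 1
      apply Finset.sum_congr rfl
      intro ℓ _
      rw [hDu ℓ]
      ring
    -- the eigenvalue identity
    have harg : 2 * ((k:ℝ) * Real.pi / (2*(N:ℝ))) = θ := by
      rw [hθ]; field_simp
    have hsin2 : 4 * Real.sin ((k:ℝ) * Real.pi / (2*(N:ℝ)))^2 = 2 - 2 * Real.cos θ := by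
      rw [Real.sin_sq_eq_half_sub, harg]
      ring
    have hlamK : lamF pF p2F rF r2F rrF rr2F g1 g2
        (4 * Real.sin ((k:ℝ) * Real.pi / (2*(N:ℝ)))^2) = K := by
      rw [hsin2, hK, show θ*2 = 2*θ from by ring, Real.cos_two_mul,
        show θ*3 = 3*θ from by ring, Real.cos_three_mul,
        hK0a, hK0b, hKab, hKbc, hKac, hKad]
      simp only [lamF, AFc, BFc, CFc, DFc, Ahat, Atil]
      ring
    rw [hlamK, hnrm]
    simp only [Qa, ← hI]
    rw [hQsum]
    ring
end
end

section
/- The quadratic form Q^a is positive definite on U (i.e., Q^a(u) > 0 for every u ∈ U with u ≠ 0) if and only if λ_F(4 sin²(π/(2N))) > 0. -/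
open Finset

noncomputable section

namespace StabAux
open Complex


/-- reindex an integer interval sum to a range sum -/
lemma sum_Icc_eq_range {M : Type*} [AddCommMonoid M] (a : ℤ) (n : ℕ) (g : ℤ → M) :
    ∑ ℓ ∈ Finset.Icc a (a + n - 1), g ℓ = ∑ j ∈ Finset.range n, g (a + j) := by
  apply Finset.sum_nbij' (fun ℓ => (ℓ - a).toNat) (fun j => a + (j:ℤ))
  · intro x hx; simp only [Finset.mem_Icc] at hx; simp only [Finset.mem_range]; omega
  · intro x hx; simp only [Finset.mem_range] at hx; simp only [Finset.mem_Icc]; omega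
  · intro x hx; simp only [Finset.mem_Icc] at hx; omega
  · intro x hx; simp only [Finset.mem_range] at hx; omega
  · intro x hx; simp only [Finset.mem_Icc] at hx; congr 1; omega

lemma range_shift {M : Type*} [AddCommGroup M] (a : ℤ) (n : ℕ) (f : ℤ → M)
    (h : f (a + n) = f a) :
    ∑ j ∈ Finset.range n, f (a + j + 1) = ∑ j ∈ Finset.range n, f (a + j) := by
  cases n with
  | zero => simp
  | succ m =>
    rw [Finset.sum_range_succ, Finset.sum_range_succ']
    have h1 : ∀ j : ℕ, f (a + ((j:ℤ)+1)) = f (a + j + 1) := by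
      intro j; congr 1; push_cast; ring
    have h2 : f (a + (0:ℕ)) = f (a + m + 1) := by
      rw [show f (a + (0:ℕ)) = f a by norm_num]
      rw [← h]; congr 1; push_cast; ring
    rw [h2]
    congr 1
    exact Finset.sum_congr rfl fun j _ => (h1 j).symm

/-- shift-by-one invariance of a periodic sum over a full period -/
lemma sum_shift_one {M : Type*} [AddCommGroup M] (N : ℤ) (hN : 1 ≤ N) (f : ℤ → M)
    (hf : ∀ ℓ, f (ℓ + 2*N) = f ℓ) :
    ∑ ℓ ∈ Finset.Icc (-N+1) N, f (ℓ+1) = ∑ ℓ ∈ Finset.Icc (-N+1) N, f ℓ := by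
  rw [show Finset.Icc (-N+1) N = Finset.Icc (-N+1) ((-N+1) + ((2*N).toNat:ℤ) - 1) by congr 1; omega]
  rw [sum_Icc_eq_range (-N+1) (2*N).toNat (fun ℓ => f (ℓ+1)),
    sum_Icc_eq_range (-N+1) (2*N).toNat f]
  apply range_shift
  rw [show (-N+1 + ((2*N).toNat :ℤ)) = (-N+1) + 2*N by omega, hf]

/-- arbitrary-shift invariance -/
lemma sum_shift {M : Type*} [AddCommGroup M] (N : ℤ) (hN : 1 ≤ N) (f : ℤ → M)
    (hf : ∀ ℓ, f (ℓ + 2*N) = f ℓ) (c : ℤ) :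
    ∑ ℓ ∈ Finset.Icc (-N+1) N, f (ℓ+c) = ∑ ℓ ∈ Finset.Icc (-N+1) N, f ℓ := by
  induction c using Int.induction_on with
  | zero => simp
  | succ i ih =>
    have := sum_shift_one N hN (fun ℓ => f (ℓ + i)) (fun ℓ => by rw [show ℓ + 2*N + (i:ℤ) = ℓ + i + 2*N by ring, hf])
    rw [← ih, ← this]
    apply Finset.sum_congr rfl; intro x _; congr 1; push_cast; ring
  | pred i ih =>
    have := sum_shift_one N hN (fun ℓ => f (ℓ + (-(i:ℤ)-1))) (fun ℓ => by rw [show ℓ + 2*N + (-(i:ℤ)-1) = ℓ + (-(i:ℤ)-1) + 2*N by ring, hf])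
    rw [← ih, ← this]
    apply Finset.sum_congr rfl; intro x _; congr 1; push_cast; ring



/-- the basic character `EE N m = exp(i m π / N)` -/
def EE (N : ℤ) (m : ℤ) : ℂ := Complex.exp (((m * Real.pi / N : ℝ) : ℂ) * Complex.I)

lemma EE_add (N : ℤ) (a b : ℤ) : EE N (a+b) = EE N a * EE N b := by
  rw [EE, EE, EE, ← Complex.exp_add]
  congr 1
  push_cast
  field_simp

lemma EE_zero (N : ℤ) : EE N 0 = 1 := by simp [EE]

lemma EE_eq (N : ℤ) (m : ℤ) :
    EE N m = ((Real.cos (m * Real.pi / N) : ℝ) : ℂ) + ((Real.sin (m * Real.pi / N) : ℝ) : ℂ) * Complex.I := by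
  rw [EE, Complex.exp_mul_I]
  norm_cast

lemma EE_conj (N : ℤ) (m : ℤ) : (starRingEnd ℂ) (EE N m) = EE N (-m) := by
  rw [EE_eq N m, EE_eq N (-m)]
  have h : ((-m : ℤ):ℝ) * Real.pi / N = -((m:ℝ) * Real.pi / N) := by push_cast; ring
  rw [h, Real.cos_neg, Real.sin_neg, map_add, map_mul, Complex.conj_I, Complex.conj_ofReal,
    Complex.conj_ofReal]
  push_cast
  ring

lemma EE_ne_zero (N : ℤ) (m : ℤ) : EE N m ≠ 0 := Complex.exp_ne_zero _

lemma EE_mul_conj (N : ℤ) (m : ℤ) : EE N m * EE N (-m) = 1 := by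
  rw [← EE_add]; simp [EE_zero]

lemma EE_period (N : ℤ) (hN : 1 ≤ N) (m t : ℤ) : EE N (m + 2*N*t) = EE N m := by
  have hN0 : (N:ℝ) ≠ 0 := by
    have : (0:ℝ) < N := by exact_mod_cast hN; 
    linarith
  rw [EE_add]
  have h2 : EE N (2*N*t) = 1 := by
    rw [EE]
    have harg : ((2*N*t : ℤ):ℝ) * Real.pi / N = t * (2 * Real.pi) := by
      push_cast; field_simp
    rw [harg]
    rw [show ((( (t:ℝ) * (2*Real.pi)) : ℝ) : ℂ) * Complex.I = (t:ℂ) * (2 * Real.pi * Complex.I) by push_cast; ring]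
    exact Complex.exp_int_mul_two_pi_mul_I t
  rw [h2, mul_one]

lemma EE_pow (N : ℤ) (m : ℤ) (j : ℕ) : EE N (m*j) = (EE N m)^j := by
  induction j with
  | zero => simp [EE_zero]
  | succ i ih =>
    push_cast
    rw [show m * ((i:ℤ)+1) = m*i + m by ring, EE_add, ih, pow_succ]

/-- the key character sum: over a full period, a nontrivial character sums to zero -/
lemma char_sum (N : ℤ) (hN : 1 ≤ N) (m : ℤ) (hm : ¬ (2*N ∣ m)) :
    ∑ ℓ ∈ Finset.Icc (-N+1) N, EE N (m*ℓ) = 0 := by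
  have hN0 : (N:ℝ) ≠ 0 := by
    have : (0:ℝ) < N := by exact_mod_cast hN
    linarith
  rw [show Finset.Icc (-N+1) N = Finset.Icc (-N+1) ((-N+1) + ((2*N).toNat:ℤ) - 1) by congr 1; omega]
  rw [sum_Icc_eq_range (-N+1) (2*N).toNat (fun ℓ => EE N (m*ℓ))]
  have hx1 : EE N m ≠ 1 := by
    intro h
    rw [EE, Complex.exp_eq_one_iff] at h
    obtain ⟨t, ht⟩ := h
    have him := congrArg Complex.im ht
    simp [Complex.mul_im, Complex.mul_re] at him
    have hmr : (m:ℝ) = 2*N*t := by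
      have hπ : Real.pi ≠ 0 := Real.pi_ne_zero
      field_simp at him
      have := mul_right_cancel₀ hπ (by linear_combination Real.pi * him :
        (m:ℝ) * Real.pi = (2*N*t) * Real.pi)
      linarith
    have : m = 2*N*t := by exact_mod_cast hmr
    exact hm ⟨t, this⟩
  have key : ∀ j : ℕ, EE N (m * ((-N+1) + (j:ℤ))) = EE N (m*(-N+1)) * (EE N m)^j := by
    intro j
    rw [show m * ((-N+1) + (j:ℤ)) = m*(-N+1) + m*j by ring, EE_add, EE_pow]
  simp only [key]
  rw [← Finset.mul_sum, geom_sum_eq hx1]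
  have hpow : (EE N m)^((2*N).toNat) = 1 := by
    rw [← EE_pow, show m * ((((2*N).toNat):ℕ):ℤ) = 0 + 2*N*m by
      rw [Int.toNat_of_nonneg (by omega : (0:ℤ) ≤ 2*N)]; ring]
    rw [EE_period N hN 0 m, EE_zero]
  rw [hpow]
  simp




/-- the discrete Fourier transform on a period -/
def Fh (N : ℤ) (v : ℤ → ℂ) (k : ℤ) : ℂ :=
  ∑ ℓ ∈ Finset.Icc (-N+1) N, v ℓ * EE N (-(k*ℓ))

lemma sum_one_I (N : ℤ) (hN : 1 ≤ N) :
    ∑ _ℓ ∈ Finset.Icc (-N+1) N, (1:ℂ) = 2*N := by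
  rw [Finset.sum_const, Int.card_Icc]
  rw [show (N + 1 - (-N+1)) = 2*N by ring]
  simp only [nsmul_eq_mul, mul_one]
  rw [show ((2*N).toNat : ℂ) = ((2*N : ℤ) : ℂ) by
    norm_cast; exact Int.toNat_of_nonneg (by omega)]
  push_cast; ring

lemma char_sum_delta (N : ℤ) (hN : 1 ≤ N) (d : ℤ) (hd : -2*N < d) (hd2 : d < 2*N) :
    ∑ k ∈ Finset.Icc (-N+1) N, EE N (d*k) = if d = 0 then 2*(N:ℂ) else 0 := by
  by_cases h : d = 0
  · subst h
    simp only [if_true, zero_mul, EE_zero]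
    exact sum_one_I N hN
  · rw [if_neg h]
    apply char_sum N hN
    intro ⟨t, ht⟩
    rcases lt_trichotomy t 0 with h'|h'|h'
    · nlinarith
    · subst h'; simp at ht; exact h ht
    · nlinarith

/-- Parseval/Plancherel for the discrete Fourier transform -/
lemma parseval (N : ℤ) (hN : 1 ≤ N) (v : ℤ → ℂ) :
    ∑ k ∈ Finset.Icc (-N+1) N, Fh N v k * (starRingEnd ℂ) (Fh N v k)
      = 2*N * ∑ ℓ ∈ Finset.Icc (-N+1) N, v ℓ * (starRingEnd ℂ) (v ℓ) := by
  have step1 : ∀ k, Fh N v k * (starRingEnd ℂ) (Fh N v k)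
      = ∑ ℓ ∈ Finset.Icc (-N+1) N, ∑ m ∈ Finset.Icc (-N+1) N,
          v ℓ * (starRingEnd ℂ) (v m) * EE N ((m-ℓ)*k) := by
    intro k
    rw [Fh, map_sum, Finset.sum_mul_sum]
    apply Finset.sum_congr rfl; intro ℓ _
    apply Finset.sum_congr rfl; intro m _
    rw [map_mul, EE_conj]
    rw [show (m-ℓ)*k = -(k*ℓ) + (-(-(k*m))) by ring, EE_add]
    ring
  calc ∑ k ∈ Finset.Icc (-N+1) N, Fh N v k * (starRingEnd ℂ) (Fh N v k)
      = ∑ ℓ ∈ Finset.Icc (-N+1) N, ∑ m ∈ Finset.Icc (-N+1) N,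
          v ℓ * (starRingEnd ℂ) (v m) * ∑ k ∈ Finset.Icc (-N+1) N, EE N ((m-ℓ)*k) := by
        rw [Finset.sum_congr rfl (fun k _ => step1 k)]
        rw [Finset.sum_comm]
        apply Finset.sum_congr rfl; intro ℓ _
        rw [Finset.sum_comm]
        apply Finset.sum_congr rfl; intro m _
        rw [Finset.mul_sum]
    _ = ∑ ℓ ∈ Finset.Icc (-N+1) N, v ℓ * (starRingEnd ℂ) (v ℓ) * (2*N) := by
        apply Finset.sum_congr rfl; intro ℓ hℓ
        simp only [Finset.mem_Icc] at hℓ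
        rw [Finset.sum_eq_single_of_mem ℓ (by simp only [Finset.mem_Icc]; omega)]
        · simp only [sub_self]
          rw [char_sum_delta N hN 0 (by omega) (by omega)]
          simp
        · intro m hm hne
          simp only [Finset.mem_Icc] at hm
          rw [char_sum_delta N hN (m-ℓ) (by omega) (by omega), if_neg (by omega)]
          ring
    _ = 2*N * ∑ ℓ ∈ Finset.Icc (-N+1) N, v ℓ * (starRingEnd ℂ) (v ℓ) := by
        rw [Finset.mul_sum]
        apply Finset.sum_congr rfl; intro ℓ _; ring


-- chunk 4: Fh structure lemmas
lemma Fh_add (N : ℤ) (v w : ℤ → ℂ) (k : ℤ) :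
    Fh N (fun ℓ => v ℓ + w ℓ) k = Fh N v k + Fh N w k := by
  rw [Fh, Fh, Fh, ← Finset.sum_add_distrib]
  apply Finset.sum_congr rfl; intro ℓ _; ring

lemma Fh_smul (N : ℤ) (c : ℂ) (v : ℤ → ℂ) (k : ℤ) :
    Fh N (fun ℓ => c * v ℓ) k = c * Fh N v k := by
  rw [Fh, Fh, Finset.mul_sum]
  apply Finset.sum_congr rfl; intro ℓ _; ring

lemma Fh_shift (N : ℤ) (hN : 1 ≤ N) (v : ℤ → ℂ) (hv : ∀ ℓ, v (ℓ + 2*N) = v ℓ) (c k : ℤ) :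
    Fh N (fun ℓ => v (ℓ+c)) k = EE N (c*k) * Fh N v k := by
  have hg : ∀ ℓ, (fun ℓ => v ℓ * EE N (-(k*(ℓ-c)))) (ℓ + 2*N)
      = (fun ℓ => v ℓ * EE N (-(k*(ℓ-c)))) ℓ := by
    intro ℓ
    simp only []
    rw [hv, show -(k*(ℓ+2*N-c)) = -(k*(ℓ-c)) + 2*N*(-k) by ring, EE_period N hN]
  have hs := sum_shift N hN (fun ℓ => v ℓ * EE N (-(k*(ℓ-c)))) hg c
  rw [Fh, Fh]
  calc ∑ ℓ ∈ Finset.Icc (-N+1) N, v (ℓ+c) * EE N (-(k*ℓ))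
      = ∑ ℓ ∈ Finset.Icc (-N+1) N, v (ℓ+c) * EE N (-(k*(ℓ+c-c))) := by
        apply Finset.sum_congr rfl; intro ℓ _; congr 2; ring
    _ = ∑ ℓ ∈ Finset.Icc (-N+1) N, v ℓ * EE N (-(k*(ℓ-c))) := hs
    _ = EE N (c*k) * ∑ ℓ ∈ Finset.Icc (-N+1) N, v ℓ * EE N (-(k*ℓ)) := by
        rw [Finset.mul_sum]
        apply Finset.sum_congr rfl; intro ℓ _
        rw [show -(k*(ℓ-c)) = c*k + -(k*ℓ) by ring, EE_add]
        ring

lemma parseval_real (N : ℤ) (hN : 1 ≤ N) (f : ℤ → ℝ) :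
    ∑ k ∈ Finset.Icc (-N+1) N, Complex.normSq (Fh N (fun ℓ => ((f ℓ : ℝ) : ℂ)) k)
      = 2*N * ∑ ℓ ∈ Finset.Icc (-N+1) N, (f ℓ)^2 := by
  have h := parseval N hN (fun ℓ => ((f ℓ : ℝ) : ℂ))
  have hL : ∑ k ∈ Finset.Icc (-N+1) N, Fh N (fun ℓ => ((f ℓ : ℝ) : ℂ)) k
        * (starRingEnd ℂ) (Fh N (fun ℓ => ((f ℓ : ℝ) : ℂ)) k)
      = ((∑ k ∈ Finset.Icc (-N+1) N, Complex.normSq (Fh N (fun ℓ => ((f ℓ : ℝ) : ℂ)) k) : ℝ) : ℂ) := by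
    push_cast
    apply Finset.sum_congr rfl; intro k _
    rw [Complex.mul_conj]
  have hR : (2*(N:ℂ)) * ∑ ℓ ∈ Finset.Icc (-N+1) N, ((f ℓ : ℝ) : ℂ) * (starRingEnd ℂ) ((f ℓ : ℝ) : ℂ)
      = (((2*N * ∑ ℓ ∈ Finset.Icc (-N+1) N, (f ℓ)^2 : ℝ)) : ℂ) := by
    push_cast
    rw [Finset.mul_sum, Finset.mul_sum]
    apply Finset.sum_congr rfl; intro ℓ _
    rw [Complex.conj_ofReal]
    ring
  rw [hL, hR] at h
  exact_mod_cast h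


-- chunk 5: the spectral decomposition of Qa

def zF (N : ℤ) (u : ℤ → ℝ) : ℤ → ℝ := fun ℓ => Dd N u ℓ + Dd N u (ℓ+1)

def wF (N : ℤ) (rF r2F : ℝ) (u : ℤ → ℝ) : ℤ → ℝ :=
  fun ℓ => rF * zF N u ℓ + r2F * (zF N u (ℓ-1) + zF N u (ℓ+1))

lemma per_Dd (N : ℤ) (u : ℤ → ℝ) (hu : IsPer N u) (ℓ : ℤ) :
    Dd N u (ℓ + 2*N) = Dd N u ℓ := by
  rw [Dd]
  rw [show ℓ + 2*N - 1 = (ℓ-1) + 2*N by ring, hu, hu, Dd]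

lemma per_zF (N : ℤ) (u : ℤ → ℝ) (hu : IsPer N u) (ℓ : ℤ) :
    zF N u (ℓ + 2*N) = zF N u ℓ := by
  rw [zF]
  rw [show ℓ + 2*N + 1 = (ℓ+1) + 2*N by ring, per_Dd N u hu, per_Dd N u hu, zF]

lemma per_wF (N : ℤ) (rF r2F : ℝ) (u : ℤ → ℝ) (hu : IsPer N u) (ℓ : ℤ) :
    wF N rF r2F u (ℓ + 2*N) = wF N rF r2F u ℓ := by
  rw [wF]
  rw [show ℓ + 2*N - 1 = (ℓ-1) + 2*N by ring, show ℓ + 2*N + 1 = (ℓ+1) + 2*N by ring,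
    per_zF N u hu, per_zF N u hu, per_zF N u hu, wF]

/-- Step A : sum decomposition of `Qa` -/
lemma Qa_decomp (N : ℤ) (hN : 1 ≤ N) (pF p2F rF r2F rrF rr2F g1 g2 : ℝ)
    (u : ℤ → ℝ) (hu : IsPer N u) :
    Qa N pF p2F rF r2F rrF rr2F g1 g2 u
      = eps N * (g2 * (∑ ℓ ∈ Finset.Icc (-N+1) N, (wF N rF r2F u ℓ)^2)
        + (p2F + 2*g1*rr2F) * (∑ ℓ ∈ Finset.Icc (-N+1) N, (zF N u ℓ)^2)
        + (pF + 2*g1*rrF) * (∑ ℓ ∈ Finset.Icc (-N+1) N, (Dd N u ℓ)^2)) := by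
  rw [Qa]
  congr 1
  have hpt : ∀ ℓ : ℤ,
      (g2 * (rF * (Dd N u ℓ + Dd N u (ℓ+1))
        + r2F * (Dd N u (ℓ-1) + Dd N u ℓ + Dd N u (ℓ+1) + Dd N u (ℓ+2)))^2
       + g1 * (rrF * (Dd N u ℓ)^2 + rr2F * (Dd N u ℓ + Dd N u (ℓ-1))^2
             + rrF * (Dd N u (ℓ+1))^2 + rr2F * (Dd N u (ℓ+1) + Dd N u (ℓ+2))^2)
       + (1/2) * (pF * ((Dd N u ℓ)^2 + (Dd N u (ℓ+1))^2)
             + p2F * ((Dd N u ℓ + Dd N u (ℓ-1))^2 + (Dd N u (ℓ+1) + Dd N u (ℓ+2))^2)))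
      = g2 * (wF N rF r2F u ℓ)^2
        + ((g1*rr2F + (1/2)*p2F) * (zF N u (ℓ+(-1)))^2
            + (g1*rr2F + (1/2)*p2F) * (zF N u (ℓ+1))^2)
        + ((g1*rrF + (1/2)*pF) * (Dd N u ℓ)^2
            + (g1*rrF + (1/2)*pF) * ((fun j => (Dd N u j)^2) (ℓ+1))) := by
    intro ℓ
    simp only [wF, zF]
    rw [show ℓ + (-1) = ℓ - 1 by ring, show ℓ - 1 + 1 = ℓ by ring]
    ring
  rw [Finset.sum_congr rfl (fun ℓ _ => hpt ℓ)]
  simp only [Finset.sum_add_distrib, ← Finset.mul_sum]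
  rw [sum_shift N hN (fun ℓ => (zF N u ℓ)^2)
      (fun ℓ => by show zF N u (ℓ+2*N) ^ 2 = zF N u ℓ ^ 2; rw [per_zF N u hu]) (-1),
    sum_shift N hN (fun ℓ => (zF N u ℓ)^2)
      (fun ℓ => by show zF N u (ℓ+2*N) ^ 2 = zF N u ℓ ^ 2; rw [per_zF N u hu]) 1,
    sum_shift N hN (fun j => (Dd N u j)^2)
      (fun ℓ => by show Dd N u (ℓ+2*N) ^ 2 = Dd N u ℓ ^ 2; rw [per_Dd N u hu]) 1]
  ring

lemma Fh_pair (N : ℤ) (hN : 1 ≤ N) (v : ℤ → ℂ) (hv : ∀ ℓ, v (ℓ + 2*N) = v ℓ) (k : ℤ) :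
    Fh N (fun ℓ => v ℓ + v (ℓ+1)) k = (1 + EE N k) * Fh N v k := by
  rw [Fh_add N v (fun ℓ => v (ℓ+1)) k, Fh_shift N hN v hv 1 k, one_mul]
  ring

lemma Fh_stencil (N : ℤ) (hN : 1 ≤ N) (z : ℤ → ℂ) (hz : ∀ ℓ, z (ℓ + 2*N) = z ℓ)
    (a b : ℂ) (k : ℤ) :
    Fh N (fun ℓ => a * z ℓ + b * (z (ℓ-1) + z (ℓ+1))) k
      = (a + b * (EE N (-k) + EE N k)) * Fh N z k := by
  have e : (fun ℓ => a * z ℓ + b * (z (ℓ-1) + z (ℓ+1)))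
      = fun ℓ => a * z ℓ + b * ((fun j => z (j+(-1))) ℓ + (fun j => z (j+1)) ℓ) := by
    funext ℓ
    simp only []
    rw [show ℓ + (-1) = ℓ - 1 by ring]
  rw [e]
  rw [Fh_add N (fun ℓ => a * z ℓ)
    (fun ℓ => b * ((fun j => z (j+(-1))) ℓ + (fun j => z (j+1)) ℓ)) k]
  rw [Fh_smul N a z k]
  rw [Fh_smul N b (fun ℓ => (fun j => z (j+(-1))) ℓ + (fun j => z (j+1)) ℓ) k]
  rw [Fh_add N (fun j => z (j+(-1))) (fun j => z (j+1)) k]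
  rw [Fh_shift N hN z hz (-1) k, Fh_shift N hN z hz 1 k]
  rw [show (-1)*k = -k by ring, one_mul]
  ring

lemma EE_add_neg (N : ℤ) (k : ℤ) :
    EE N (-k) + EE N k = ((2 * Real.cos (k*Real.pi/N) : ℝ) : ℂ) := by
  rw [EE_eq, EE_eq]
  rw [show ((-k : ℤ):ℝ) * Real.pi / N = -((k:ℝ)*Real.pi/N) by push_cast; ring,
    Real.cos_neg, Real.sin_neg]
  push_cast
  ring

lemma normSq_one_add_EE (N : ℤ) (k : ℤ) :
    Complex.normSq (1 + EE N k) = 2 + 2*Real.cos ((k:ℝ)*Real.pi/N) := by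
  rw [EE_eq]
  rw [show (1:ℂ) + (((Real.cos ((k:ℝ)*Real.pi/N) : ℝ):ℂ) + ((Real.sin ((k:ℝ)*Real.pi/N) : ℝ):ℂ) * Complex.I)
    = Complex.mk (1 + Real.cos ((k:ℝ)*Real.pi/N)) (Real.sin ((k:ℝ)*Real.pi/N)) by
      rw [Complex.mk_eq_add_mul_I]; push_cast; ring]
  rw [Complex.normSq_mk]
  nlinarith [Real.sin_sq_add_cos_sq ((k:ℝ)*Real.pi/N)]

lemma normSq_mult (N : ℤ) (rF r2F : ℝ) (k : ℤ) :
    Complex.normSq ((rF:ℂ) + (r2F:ℂ) * (EE N (-k) + EE N k))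
      = (rF + 2*r2F*Real.cos ((k:ℝ)*Real.pi/N))^2 := by
  rw [EE_add_neg]
  rw [show (rF:ℂ) + (r2F:ℂ) * ((2 * Real.cos ((k:ℝ)*Real.pi/N) : ℝ) : ℂ)
    = (((rF + 2*r2F*Real.cos ((k:ℝ)*Real.pi/N)) : ℝ) : ℂ) by push_cast; ring]
  rw [Complex.normSq_ofReal]
  ring

lemma lam_eq (pF p2F rF r2F rrF rr2F g1 g2 c : ℝ) :
    lamF pF p2F rF r2F rrF rr2F g1 g2 (2-2*c)
      = (pF + 2*g1*rrF) + (p2F + 2*g1*rr2F)*(2+2*c)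
        + g2*((rF + 2*r2F*c)^2*(2+2*c)) := by
  rw [lamF, AFc, BFc, CFc, DFc, Ahat, Atil]
  ring

-- chunk 6: full spectral representation

def vCf (N : ℤ) (u : ℤ → ℝ) : ℤ → ℂ := fun ℓ => ((Dd N u ℓ : ℝ) : ℂ)
def zCf (N : ℤ) (u : ℤ → ℝ) : ℤ → ℂ := fun ℓ => ((zF N u ℓ : ℝ) : ℂ)
def wCf (N : ℤ) (rF r2F : ℝ) (u : ℤ → ℝ) : ℤ → ℂ :=
  fun ℓ => ((wF N rF r2F u ℓ : ℝ) : ℂ)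

lemma Qa_spectral (N : ℤ) (hN : 1 ≤ N) (pF p2F rF r2F rrF rr2F g1 g2 : ℝ)
    (u : ℤ → ℝ) (hu : IsPer N u) :
    Qa N pF p2F rF r2F rrF rr2F g1 g2 u
      = eps N / (2*(N:ℝ)) * ∑ k ∈ Finset.Icc (-N+1) N,
          lamF pF p2F rF r2F rrF rr2F g1 g2 (2 - 2*Real.cos ((k:ℝ)*Real.pi/(N:ℝ)))
            * Complex.normSq (Fh N (vCf N u) k) := by
  have hNR : (0:ℝ) < (N:ℝ) := by
    have : (1:ℝ) ≤ (N:ℝ) := by exact_mod_cast hN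
    linarith
  have pervC : ∀ ℓ, vCf N u (ℓ + 2*N) = vCf N u ℓ := by
    intro ℓ; show ((Dd N u (ℓ+2*N) : ℝ) : ℂ) = _; rw [per_Dd N u hu]; rfl
  have perzC : ∀ ℓ, zCf N u (ℓ + 2*N) = zCf N u ℓ := by
    intro ℓ; show ((zF N u (ℓ+2*N) : ℝ) : ℂ) = _; rw [per_zF N u hu]; rfl
  have hFz : ∀ k, Fh N (zCf N u) k = (1 + EE N k) * Fh N (vCf N u) k := by
    intro k
    have e : zCf N u = fun ℓ => vCf N u ℓ + vCf N u (ℓ+1) := by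
      funext ℓ
      show ((zF N u ℓ : ℝ) : ℂ) = ((Dd N u ℓ : ℝ) : ℂ) + ((Dd N u (ℓ+1) : ℝ) : ℂ)
      rw [zF]; push_cast; ring
    rw [e, Fh_pair N hN (vCf N u) pervC k]
  have hFw : ∀ k, Fh N (wCf N rF r2F u) k
      = ((rF:ℂ) + (r2F:ℂ)*(EE N (-k) + EE N k)) * Fh N (zCf N u) k := by
    intro k
    have e : wCf N rF r2F u
        = fun ℓ => (rF:ℂ) * zCf N u ℓ + (r2F:ℂ) * (zCf N u (ℓ-1) + zCf N u (ℓ+1)) := by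
      funext ℓ
      show ((wF N rF r2F u ℓ : ℝ) : ℂ) = _
      show _ = (rF:ℂ) * ((zF N u ℓ : ℝ) : ℂ)
        + (r2F:ℂ) * (((zF N u (ℓ-1) : ℝ) : ℂ) + ((zF N u (ℓ+1) : ℝ) : ℂ))
      rw [wF]; push_cast; ring
    rw [e, Fh_stencil N hN (zCf N u) perzC (rF:ℂ) (r2F:ℂ) k]
  have hPW : ∑ k ∈ Finset.Icc (-N+1) N, Complex.normSq (Fh N (wCf N rF r2F u) k)
      = 2*(N:ℝ) * ∑ ℓ ∈ Finset.Icc (-N+1) N, (wF N rF r2F u ℓ)^2 :=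
    parseval_real N hN (wF N rF r2F u)
  have hPZ : ∑ k ∈ Finset.Icc (-N+1) N, Complex.normSq (Fh N (zCf N u) k)
      = 2*(N:ℝ) * ∑ ℓ ∈ Finset.Icc (-N+1) N, (zF N u ℓ)^2 :=
    parseval_real N hN (zF N u)
  have hPV : ∑ k ∈ Finset.Icc (-N+1) N, Complex.normSq (Fh N (vCf N u) k)
      = 2*(N:ℝ) * ∑ ℓ ∈ Finset.Icc (-N+1) N, (Dd N u ℓ)^2 :=
    parseval_real N hN (Dd N u)
  calc Qa N pF p2F rF r2F rrF rr2F g1 g2 u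
      = eps N * (g2 * (∑ ℓ ∈ Finset.Icc (-N+1) N, (wF N rF r2F u ℓ)^2)
        + (p2F + 2*g1*rr2F) * (∑ ℓ ∈ Finset.Icc (-N+1) N, (zF N u ℓ)^2)
        + (pF + 2*g1*rrF) * (∑ ℓ ∈ Finset.Icc (-N+1) N, (Dd N u ℓ)^2)) :=
        Qa_decomp N hN pF p2F rF r2F rrF rr2F g1 g2 u hu
    _ = eps N / (2*(N:ℝ)) * (g2 * (2*(N:ℝ) * ∑ ℓ ∈ Finset.Icc (-N+1) N, (wF N rF r2F u ℓ)^2)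
        + (p2F + 2*g1*rr2F) * (2*(N:ℝ) * ∑ ℓ ∈ Finset.Icc (-N+1) N, (zF N u ℓ)^2)
        + (pF + 2*g1*rrF) * (2*(N:ℝ) * ∑ ℓ ∈ Finset.Icc (-N+1) N, (Dd N u ℓ)^2)) := by
        field_simp
    _ = eps N / (2*(N:ℝ)) * (g2 * (∑ k ∈ Finset.Icc (-N+1) N, Complex.normSq (Fh N (wCf N rF r2F u) k))
        + (p2F + 2*g1*rr2F) * (∑ k ∈ Finset.Icc (-N+1) N, Complex.normSq (Fh N (zCf N u) k))
        + (pF + 2*g1*rrF) * (∑ k ∈ Finset.Icc (-N+1) N, Complex.normSq (Fh N (vCf N u) k))) := by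
        rw [hPW, hPZ, hPV]
    _ = eps N / (2*(N:ℝ)) * ∑ k ∈ Finset.Icc (-N+1) N,
          (g2 * Complex.normSq (Fh N (wCf N rF r2F u) k)
            + (p2F + 2*g1*rr2F) * Complex.normSq (Fh N (zCf N u) k)
            + (pF + 2*g1*rrF) * Complex.normSq (Fh N (vCf N u) k)) := by
        rw [Finset.mul_sum, Finset.mul_sum, Finset.mul_sum, ← Finset.sum_add_distrib,
          ← Finset.sum_add_distrib]
    _ = eps N / (2*(N:ℝ)) * ∑ k ∈ Finset.Icc (-N+1) N,
          lamF pF p2F rF r2F rrF rr2F g1 g2 (2 - 2*Real.cos ((k:ℝ)*Real.pi/(N:ℝ)))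
            * Complex.normSq (Fh N (vCf N u) k) := by
        congr 1
        apply Finset.sum_congr rfl; intro k _
        rw [hFw k, hFz k, Complex.normSq_mul, Complex.normSq_mul, normSq_mult,
          normSq_one_add_EE, lam_eq]
        ring

-- chunk 7: side lemmas

lemma eps_pos (N : ℤ) (hN : 1 ≤ N) : 0 < eps N := by
  rw [eps]
  have : (1:ℝ) ≤ (N:ℝ) := by exact_mod_cast hN
  positivity

lemma Fh_zero_mode (N : ℤ) (hN : 1 ≤ N) (u : ℤ → ℝ) (hu : IsPer N u) :
    Fh N (vCf N u) 0 = 0 := by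
  have h1 : Fh N (vCf N u) 0 = ∑ ℓ ∈ Finset.Icc (-N+1) N, ((Dd N u ℓ : ℝ) : ℂ) := by
    rw [Fh]
    apply Finset.sum_congr rfl; intro ℓ _
    rw [show -((0:ℤ)*ℓ) = 0 by ring, EE_zero, mul_one]; rfl
  rw [h1, ← Complex.ofReal_sum]
  have h2 : ∑ ℓ ∈ Finset.Icc (-N+1) N, Dd N u ℓ = 0 := by
    calc ∑ ℓ ∈ Finset.Icc (-N+1) N, Dd N u ℓ
        = ∑ ℓ ∈ Finset.Icc (-N+1) N, (u ℓ - (fun j => u j) (ℓ+(-1))) / eps N := by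
          apply Finset.sum_congr rfl; intro ℓ _
          rw [Dd, show ℓ+(-1) = ℓ-1 by ring]
      _ = (∑ ℓ ∈ Finset.Icc (-N+1) N, u ℓ
            - ∑ ℓ ∈ Finset.Icc (-N+1) N, (fun j => u j) (ℓ+(-1))) / eps N := by
          rw [← Finset.sum_div, Finset.sum_sub_distrib]
      _ = 0 := by
          rw [sum_shift N hN (fun j => u j) hu (-1)]
          simp
  rw [h2]
  simp

lemma per_iter (N : ℤ) (v : ℤ → ℝ) (hv : ∀ ℓ, v (ℓ + 2*N) = v ℓ) (m : ℤ) (ℓ : ℤ) :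
    v (ℓ + 2*N*m) = v ℓ := by
  induction m using Int.induction_on with
  | zero => simp
  | succ i ih =>
    rw [show ℓ + 2*N*((i:ℤ)+1) = (ℓ + 2*N*i) + 2*N by ring, hv, ih]
  | pred i ih =>
    have := hv ((ℓ + 2*N*(-(i:ℤ)-1)))
    rw [show ℓ + 2*N*(-(i:ℤ)-1) + 2*N = ℓ + 2*N*(-(i:ℤ)) by ring] at this
    rw [← this, ih]

lemma exists_rep (N : ℤ) (hN : 1 ≤ N) (v : ℤ → ℝ) (hv : ∀ ℓ, v (ℓ + 2*N) = v ℓ)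
    (ℓ₀ : ℤ) : ∃ ℓ ∈ Finset.Icc (-N+1) N, v ℓ = v ℓ₀ := by
  set q := (ℓ₀ + N - 1) / (2*N) with hq
  refine ⟨ℓ₀ - 2*N*q, ?_, ?_⟩
  · have h1 : 0 ≤ (ℓ₀ + N - 1) % (2*N) := Int.emod_nonneg _ (by omega)
    have h2 : (ℓ₀ + N - 1) % (2*N) < 2*N := Int.emod_lt_of_pos _ (by omega)
    have h3 : (ℓ₀ + N - 1) % (2*N) = ℓ₀ + N - 1 - 2*N*q := by
      rw [hq, Int.emod_def]
    simp only [Finset.mem_Icc]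
    omega
  · have := per_iter N v hv q (ℓ₀ - 2*N*q)
    rw [show ℓ₀ - 2*N*q + 2*N*q = ℓ₀ by ring] at this
    rw [← this]

lemma sum_sq_pos (N : ℤ) (hN : 1 ≤ N) (v : ℤ → ℝ) (hv : ∀ ℓ, v (ℓ + 2*N) = v ℓ)
    (h : ∃ ℓ₀, v ℓ₀ ≠ 0) : 0 < ∑ ℓ ∈ Finset.Icc (-N+1) N, (v ℓ)^2 := by
  obtain ⟨ℓ₀, h0⟩ := h
  obtain ⟨ℓ, hmem, heq⟩ := exists_rep N hN v hv ℓ₀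
  apply Finset.sum_pos' (fun i _ => sq_nonneg _)
  exact ⟨ℓ, hmem, by rw [heq]; positivity⟩

lemma Dd_nonzero (N : ℤ) (hN : 1 ≤ N) (u : ℤ → ℝ) (hu : InU N u) (hne : u ≠ 0) :
    ∃ ℓ, Dd N u ℓ ≠ 0 := by
  by_contra h
  push_neg at h
  have heps : eps N ≠ 0 := ne_of_gt (eps_pos N hN)
  have hstep : ∀ ℓ : ℤ, u ℓ = u (ℓ-1) := by
    intro ℓ
    have := h ℓ
    rw [Dd] at this
    field_simp at this
    linarith
  have hconst : ∀ ℓ : ℤ, u ℓ = u 0 := by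
    intro ℓ
    induction ℓ using Int.induction_on with
    | zero => rfl
    | succ i ih => rw [← ih, hstep ((i:ℤ)+1), show (i:ℤ)+1-1 = (i:ℤ) by ring]
    | pred i ih => rw [← ih, show (-(i:ℤ)-1) = (-(i:ℤ))-1 by ring, ← hstep (-(i:ℤ))]
  have hmean := hu.2
  rw [Finset.sum_congr rfl (fun ℓ _ => hconst ℓ), Finset.sum_const, Int.card_Icc] at hmean
  have hcard : ((N + 1 - (-N+1)).toNat : ℝ) ≠ 0 := by
    have : (N + 1 - (-N+1)).toNat = (2*N).toNat := by omega
    rw [this]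
    simp only [ne_eq, Nat.cast_eq_zero]
    omega
  have hu0 : u 0 = 0 := by
    simp only [nsmul_eq_mul] at hmean
    rcases mul_eq_zero.1 hmean with h'|h'
    · exact absurd h' hcard
    · exact h'
  apply hne
  funext ℓ
  rw [hconst ℓ, hu0]; rfl

lemma two_sub_two_cos (x : ℝ) : 2 - 2*Real.cos (2*x) = 4 * Real.sin x ^ 2 := by
  rw [Real.cos_two_mul']
  nlinarith [Real.sin_sq_add_cos_sq x]

lemma angle_split (N : ℤ) (hN : 1 ≤ N) (k : ℤ) :
    (k:ℝ)*Real.pi/(N:ℝ) = 2*((k:ℝ)*Real.pi/(2*(N:ℝ))) := by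
  have hNR : ((N:ℝ)) ≠ 0 := by
    have : (1:ℝ) ≤ (N:ℝ) := by exact_mod_cast hN
    linarith
  field_simp

lemma sin_sq_bounds (N : ℤ) (hN : 1 ≤ N) (k : ℤ) (hk1 : -N+1 ≤ k) (hk2 : k ≤ N)
    (h0 : k ≠ 0) :
    Real.sin (Real.pi/(2*(N:ℝ)))^2 ≤ Real.sin ((k:ℝ)*Real.pi/(2*(N:ℝ)))^2
      ∧ Real.sin ((k:ℝ)*Real.pi/(2*(N:ℝ)))^2 ≤ 1 := by
  have hNR : (1:ℝ) ≤ (N:ℝ) := by exact_mod_cast hN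
  have hpi := Real.pi_pos
  set K := |(k:ℝ)| with hK
  have hKcast : K = ((|k| : ℤ) : ℝ) := by rw [hK, Int.cast_abs]
  have habs : Real.sin ((k:ℝ)*Real.pi/(2*(N:ℝ)))^2 = Real.sin (K*Real.pi/(2*(N:ℝ)))^2 := by
    rcases abs_cases (k:ℝ) with ⟨h,_⟩|⟨h,_⟩
    · rw [hK, h]
    · rw [hK, h, show -(k:ℝ)*Real.pi/(2*(N:ℝ)) = -((k:ℝ)*Real.pi/(2*(N:ℝ))) by ring,
        Real.sin_neg]
      ring
  rw [habs]
  have hk1' : (1:ℝ) ≤ K := by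
    rw [hKcast]
    exact_mod_cast (by rcases abs_cases k with ⟨h,_⟩|⟨h,_⟩ <;> omega : (1:ℤ) ≤ |k|)
  have hkN : K ≤ (N:ℝ) := by
    rw [hKcast]
    exact_mod_cast (by rcases abs_cases k with ⟨h,_⟩|⟨h,_⟩ <;> omega : |k| ≤ N)
  set a := Real.pi/(2*(N:ℝ)) with ha
  have hapos : 0 < a := by rw [ha]; positivity
  have hbig : K * Real.pi/(2*(N:ℝ)) = K * a := by rw [ha]; ring
  rw [hbig]
  have hka_le : K * a ≤ Real.pi/2 := by
    rw [ha]
    rw [show K * (Real.pi/(2*(N:ℝ))) = K*Real.pi/(2*(N:ℝ)) by ring]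
    rw [div_le_div_iff₀ (by positivity) (by norm_num)]
    nlinarith
  have ha_le : a ≤ K * a := by nlinarith
  have hmono := Real.strictMonoOn_sin.monotoneOn
  have hs1 : Real.sin a ≤ Real.sin (K*a) := by
    apply hmono
    · constructor <;> [linarith; linarith]
    · constructor <;> [nlinarith; linarith]
    · exact ha_le
  have hsin_nonneg : 0 ≤ Real.sin a := by
    apply Real.sin_nonneg_of_nonneg_of_le_pi (le_of_lt hapos)
    linarith
  have hsin_nonneg2 : 0 ≤ Real.sin (K*a) := by
    apply Real.sin_nonneg_of_nonneg_of_le_pi (by nlinarith)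
    linarith
  constructor
  · nlinarith
  · nlinarith [Real.sin_le_one (K*a)]

lemma lam_mono (pF p2F rF r2F rrF rr2F g1 g2 : ℝ) (hc : rF ≤ 0) (hd : r2F ≤ 0)
    (hg2 : 0 ≤ g2) (hB : 0 ≤ BFc p2F rF r2F rr2F g1 g2) (s1 s : ℝ)
    (h0 : 0 ≤ s1) (h1 : s1 ≤ s) (h4 : s ≤ 4) :
    lamF pF p2F rF r2F rrF rr2F g1 g2 s1 ≤ lamF pF p2F rF r2F rrF rr2F g1 g2 s := by
  have hss : 0 ≤ s - s1 := by linarith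
  have hs0 : 0 ≤ s := le_trans h0 h1
  have hs14 : s1 ≤ 4 := le_trans h1 h4
  have h8 : s^2 + s*s1 + s1^2 ≤ 8*(s+s1) := by nlinarith
  have hrr : 0 ≤ rF * r2F := by nlinarith
  have hbr : 0 ≤ (8*r2F^2 + 2*rF*r2F)*(s+s1) - r2F^2*(s^2+s*s1+s1^2) := by
    nlinarith [mul_nonneg (sq_nonneg r2F) (by linarith : 0 ≤ 8*(s+s1) - (s^2+s*s1+s1^2)),
      mul_nonneg hrr (by linarith : 0 ≤ s + s1)]
  rw [lamF, lamF]
  set B := BFc p2F rF r2F rr2F g1 g2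
  rw [CFc, DFc]
  nlinarith [mul_nonneg hB hss,
    mul_nonneg (mul_nonneg hg2 hss) hbr]

-- chunk 8: the test function

def utest (N : ℤ) : ℤ → ℝ := fun ℓ => Real.sin ((2*(ℓ:ℝ)+1) * Real.pi / (2*(N:ℝ)))

lemma Ncast_pos (N : ℤ) (hN : 1 ≤ N) : (0:ℝ) < (N:ℝ) := by
  have : (1:ℝ) ≤ (N:ℝ) := by exact_mod_cast hN
  linarith

lemma utest_per (N : ℤ) (hN : 1 ≤ N) : IsPer N (utest N) := by
  intro ℓ
  have hNR := Ncast_pos N hN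
  show Real.sin ((2*((ℓ + 2*N :ℤ):ℝ)+1) * Real.pi / (2*(N:ℝ))) = _
  have harg : (2*((ℓ + 2*N :ℤ):ℝ)+1) * Real.pi / (2*(N:ℝ))
      = (2*(ℓ:ℝ)+1) * Real.pi / (2*(N:ℝ)) + 2*Real.pi := by
    push_cast
    field_simp
    ring
  rw [harg, Real.sin_add_two_pi]
  rfl

lemma utest_neg (N : ℤ) (hN : 1 ≤ N) (ℓ : ℤ) : utest N (-1-ℓ) = - utest N ℓ := by
  show Real.sin ((2*((-1-ℓ :ℤ):ℝ)+1) * Real.pi / (2*(N:ℝ))) = _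
  have harg : (2*((-1-ℓ :ℤ):ℝ)+1) * Real.pi / (2*(N:ℝ))
      = -((2*(ℓ:ℝ)+1) * Real.pi / (2*(N:ℝ))) := by
    push_cast
    ring
  rw [harg, Real.sin_neg]
  rfl

lemma utest_mean (N : ℤ) (hN : 1 ≤ N) :
    ∑ ℓ ∈ Finset.Icc (-N+1) N, utest N ℓ = 0 := by
  apply Finset.sum_involution (fun ℓ _ => if N - 1 ≤ ℓ then -1-ℓ+2*N else -1-ℓ)
  · intro a ha
    by_cases h : N - 1 ≤ a
    · rw [if_pos h]
      rw [utest_per N hN (-1-a), utest_neg N hN a]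
      ring
    · rw [if_neg h, utest_neg N hN a]
      ring
  · intro a ha _
    simp only [Finset.mem_Icc] at ha
    by_cases h : N - 1 ≤ a
    · rw [if_pos h]; omega
    · rw [if_neg h]; omega
  · intro a ha
    simp only [Finset.mem_Icc] at ha ⊢
    by_cases h : N - 1 ≤ a
    · rw [if_pos h]; omega
    · rw [if_neg h]; omega
  · intro a ha
    simp only [Finset.mem_Icc] at ha
    by_cases h : N - 1 ≤ a
    · rw [if_pos h, if_pos (by omega : N - 1 ≤ -1-a+2*N)]
      ring
    · rw [if_neg h, if_neg (by omega : ¬ (N - 1 ≤ -1-a))]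
      ring

lemma utest_ne_zero (N : ℤ) (hN : 1 ≤ N) : utest N ≠ 0 := by
  intro h
  have h0 : utest N 0 = 0 := by rw [h]; rfl
  have : utest N 0 = Real.sin (Real.pi / (2*(N:ℝ))) := by
    show Real.sin ((2*((0:ℤ):ℝ)+1) * Real.pi / (2*(N:ℝ))) = _
    norm_num
  rw [this] at h0
  have hNR := Ncast_pos N hN
  have hNR1 : (1:ℝ) ≤ (N:ℝ) := by exact_mod_cast hN
  have hpi := Real.pi_pos
  have hpos : 0 < Real.sin (Real.pi / (2*(N:ℝ))) := by
    apply Real.sin_pos_of_pos_of_lt_pi (by positivity)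
    rw [div_lt_iff₀ (by positivity)]
    nlinarith
  linarith [h0, hpos]

lemma Dd_utest (N : ℤ) (hN : 1 ≤ N) (ℓ : ℤ) :
    Dd N (utest N) ℓ
      = (2*Real.sin (Real.pi/(2*(N:ℝ))) / eps N) * Real.cos ((ℓ:ℝ)*Real.pi/(N:ℝ)) := by
  have hNR := Ncast_pos N hN
  rw [Dd]
  have e0 : utest N ℓ = Real.sin ((2*(ℓ:ℝ)+1) * Real.pi / (2*(N:ℝ))) := rfl
  have e0' : utest N (ℓ-1) = Real.sin ((2*((ℓ:ℝ)-1)+1) * Real.pi / (2*(N:ℝ))) := by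
    show Real.sin ((2*((ℓ-1 :ℤ):ℝ)+1) * Real.pi / (2*(N:ℝ))) = _
    push_cast
    ring_nf
  have e1 : (2*(ℓ:ℝ)+1) * Real.pi / (2*(N:ℝ))
      = (ℓ:ℝ)*Real.pi/(N:ℝ) + Real.pi/(2*(N:ℝ)) := by field_simp
  have e2 : (2*((ℓ:ℝ)-1)+1) * Real.pi / (2*(N:ℝ))
      = (ℓ:ℝ)*Real.pi/(N:ℝ) - Real.pi/(2*(N:ℝ)) := by field_simp; ring
  rw [e0, e0', e1, e2, Real.sin_add, Real.sin_sub]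
  field_simp
  ring

lemma Fh_utest_vanish (N : ℤ) (hN : 1 ≤ N) (k : ℤ) (hk1 : -N+1 ≤ k) (hk2 : k ≤ N)
    (h1 : k ≠ 1) (h2 : k ≠ -1) :
    Fh N (vCf N (utest N)) k = 0 := by
  have hd1 : ¬ (2*N ∣ (-1-k)) := by
    rintro ⟨t, ht⟩
    rcases lt_trichotomy t 0 with h'|h'|h'
    · have : 2*N*t ≤ 2*N*(-1) := by nlinarith
      omega
    · subst h'; omega
    · have : 2*N*1 ≤ 2*N*t := by nlinarith
      omega
  have hd2 : ¬ (2*N ∣ (1-k)) := by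
    rintro ⟨t, ht⟩
    rcases lt_trichotomy t 0 with h'|h'|h'
    · have : 2*N*t ≤ 2*N*(-1) := by nlinarith
      omega
    · subst h'; omega
    · have : 2*N*1 ≤ 2*N*t := by nlinarith
      omega
  rw [Fh]
  have hc : ∀ ℓ : ℤ, vCf N (utest N) ℓ * EE N (-(k*ℓ))
      = (((2*Real.sin (Real.pi/(2*(N:ℝ)))/eps N : ℝ):ℂ)/2)
          * (EE N ((-1-k)*ℓ) + EE N ((1-k)*ℓ)) := by
    intro ℓ
    show ((Dd N (utest N) ℓ : ℝ):ℂ) * EE N (-(k*ℓ)) = _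
    rw [Dd_utest N hN ℓ, Complex.ofReal_mul]
    have h2c := (EE_add_neg N ℓ).symm
    have hcos : ((Real.cos ((ℓ:ℝ)*Real.pi/(N:ℝ)) : ℝ):ℂ) = (EE N (-ℓ) + EE N ℓ)/2 := by
      rw [← h2c]
      push_cast
      ring
    rw [hcos]
    rw [show (((2*Real.sin (Real.pi/(2*(N:ℝ)))/eps N : ℝ):ℂ)) * ((EE N (-ℓ) + EE N ℓ)/2) * EE N (-(k*ℓ))
      = (((2*Real.sin (Real.pi/(2*(N:ℝ)))/eps N : ℝ):ℂ)/2)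
        * (EE N (-ℓ) * EE N (-(k*ℓ)) + EE N ℓ * EE N (-(k*ℓ))) by ring]
    rw [← EE_add N (-ℓ) (-(k*ℓ)), ← EE_add N ℓ (-(k*ℓ)),
      show -ℓ + -(k*ℓ) = (-1-k)*ℓ by ring, show ℓ + -(k*ℓ) = (1-k)*ℓ by ring]
  rw [Finset.sum_congr rfl (fun ℓ _ => hc ℓ), ← Finset.mul_sum, Finset.sum_add_distrib,
    char_sum N hN (-1-k) hd1, char_sum N hN (1-k) hd2]
  simp

end StabAux

/-- sharp stability of the atomistic model. -/
theorem atomistic_sharp_stability (N : ℤ) (hN : 1 ≤ N)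
    (pF p2F rF r2F rrF rr2F g1 g2 : ℝ)
    (hH1a : 0 < pF) (hH1b : p2F < 0) (hH1c : rF ≤ 0) (hH1d : r2F ≤ 0)
    (hH1e : 0 ≤ rrF) (hH1f : 0 ≤ rr2F) (hH1g : 0 ≤ g2)
    (hH2 : 0 ≤ BFc p2F rF r2F rr2F g1 g2) :
    (∀ u : ℤ → ℝ, InU N u → u ≠ 0 → 0 < Qa N pF p2F rF r2F rrF rr2F g1 g2 u)
    ↔ 0 < lamF pF p2F rF r2F rrF rr2F g1 g2
        (4 * Real.sin (Real.pi / (2*(N:ℝ)))^2) := by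
  classical
  have hNR : (0:ℝ) < (N:ℝ) := StabAux.Ncast_pos N hN
  have heps := StabAux.eps_pos N hN
  have hfrac : (0:ℝ) < eps N / (2*(N:ℝ)) := by positivity
  set L := lamF pF p2F rF r2F rrF rr2F g1 g2 with hL
  set s1 := 4 * Real.sin (Real.pi / (2*(N:ℝ)))^2 with hs1
  have hs1nonneg : 0 ≤ s1 := by rw [hs1]; positivity
  constructor
  · -- positivity of Qa implies positivity of λ at the first mode
    intro hpos
    have hInU : InU N (StabAux.utest N) := ⟨StabAux.utest_per N hN, StabAux.utest_mean N hN⟩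
    have hQ := hpos _ hInU (StabAux.utest_ne_zero N hN)
    rw [StabAux.Qa_spectral N hN pF p2F rF r2F rrF rr2F g1 g2 _ (StabAux.utest_per N hN)] at hQ
    rw [← hL] at hQ
    have hsum : ∑ k ∈ Finset.Icc (-N+1) N,
        L (2 - 2*Real.cos ((k:ℝ)*Real.pi/(N:ℝ)))
          * Complex.normSq (StabAux.Fh N (StabAux.vCf N (StabAux.utest N)) k)
        = L s1 * ∑ k ∈ Finset.Icc (-N+1) N,
            Complex.normSq (StabAux.Fh N (StabAux.vCf N (StabAux.utest N)) k) := by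
      rw [Finset.mul_sum]
      apply Finset.sum_congr rfl
      intro k hk
      simp only [Finset.mem_Icc] at hk
      by_cases h1 : k = 1
      · subst h1
        have earg : (((1:ℤ)):ℝ)*Real.pi/(N:ℝ) = 2*(Real.pi/(2*(N:ℝ))) := by
          push_cast
          field_simp
        rw [earg, StabAux.two_sub_two_cos, ← hs1]
      · by_cases h2 : k = -1
        · subst h2
          have earg : (((-1:ℤ)):ℝ)*Real.pi/(N:ℝ) = -(2*(Real.pi/(2*(N:ℝ)))) := by
            push_cast
            field_simp
          rw [earg, Real.cos_neg, StabAux.two_sub_two_cos, ← hs1]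
        · rw [StabAux.Fh_utest_vanish N hN k hk.1 hk.2 h1 h2]
          simp
    rw [hsum] at hQ
    by_contra hle
    push_neg at hle
    have hPnon : (0:ℝ) ≤ ∑ k ∈ Finset.Icc (-N+1) N,
        Complex.normSq (StabAux.Fh N (StabAux.vCf N (StabAux.utest N)) k) :=
      Finset.sum_nonneg (fun k _ => Complex.normSq_nonneg _)
    have h1 : L s1 * ∑ k ∈ Finset.Icc (-N+1) N,
        Complex.normSq (StabAux.Fh N (StabAux.vCf N (StabAux.utest N)) k) ≤ 0 :=
      mul_nonpos_of_nonpos_of_nonneg hle hPnon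
    nlinarith
  · -- positivity of λ at the first mode implies positivity of Qa
    intro hlam u hu hne
    rw [StabAux.Qa_spectral N hN pF p2F rF r2F rrF rr2F g1 g2 u hu.1, ← hL]
    have hzero := StabAux.Fh_zero_mode N hN u hu.1
    have hterm : ∀ k ∈ Finset.Icc (-N+1) N,
        L s1 * Complex.normSq (StabAux.Fh N (StabAux.vCf N u) k)
          ≤ L (2 - 2*Real.cos ((k:ℝ)*Real.pi/(N:ℝ)))
              * Complex.normSq (StabAux.Fh N (StabAux.vCf N u) k) := by
      intro k hk
      simp only [Finset.mem_Icc] at hk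
      by_cases h0 : k = 0
      · subst h0
        rw [hzero]
        simp
      · apply mul_le_mul_of_nonneg_right _ (Complex.normSq_nonneg _)
        have harg : 2 - 2*Real.cos ((k:ℝ)*Real.pi/(N:ℝ))
            = 4*Real.sin ((k:ℝ)*Real.pi/(2*(N:ℝ)))^2 := by
          rw [StabAux.angle_split N hN k, StabAux.two_sub_two_cos]
        rw [harg, hL, hs1]
        obtain ⟨hb1, hb2⟩ := StabAux.sin_sq_bounds N hN k hk.1 hk.2 h0
        apply StabAux.lam_mono pF p2F rF r2F rrF rr2F g1 g2 hH1c hH1d hH1g hH2 _ _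
          (by positivity) (by nlinarith) (by nlinarith)
    have hsum_le := Finset.sum_le_sum hterm
    have hP : ∑ k ∈ Finset.Icc (-N+1) N, Complex.normSq (StabAux.Fh N (StabAux.vCf N u) k)
        = 2*(N:ℝ) * ∑ ℓ ∈ Finset.Icc (-N+1) N, (Dd N u ℓ)^2 :=
      StabAux.parseval_real N hN (Dd N u)
    have hDpos : 0 < ∑ ℓ ∈ Finset.Icc (-N+1) N, (Dd N u ℓ)^2 :=
      StabAux.sum_sq_pos N hN (Dd N u) (StabAux.per_Dd N u hu.1)
        (StabAux.Dd_nonzero N hN u hu hne)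
    have hfac : ∑ k ∈ Finset.Icc (-N+1) N,
        L s1 * Complex.normSq (StabAux.Fh N (StabAux.vCf N u) k)
        = L s1 * (2*(N:ℝ) * ∑ ℓ ∈ Finset.Icc (-N+1) N, (Dd N u ℓ)^2) := by
      rw [← Finset.mul_sum, hP]
    calc (0:ℝ)
        < eps N / (2*(N:ℝ)) * (L s1 * (2*(N:ℝ) * ∑ ℓ ∈ Finset.Icc (-N+1) N, (Dd N u ℓ)^2)) := by
          apply mul_pos hfrac
          apply mul_pos hlam
          positivity
      _ = eps N / (2*(N:ℝ)) * ∑ k ∈ Finset.Icc (-N+1) N,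
            L s1 * Complex.normSq (StabAux.Fh N (StabAux.vCf N u) k) := by rw [hfac]
      _ ≤ eps N / (2*(N:ℝ)) * ∑ k ∈ Finset.Icc (-N+1) N,
            L (2 - 2*Real.cos ((k:ℝ)*Real.pi/(N:ℝ)))
              * Complex.normSq (StabAux.Fh N (StabAux.vCf N u) k) :=
          mul_le_mul_of_nonneg_left hsum_le (le_of_lt hfrac)
end
end
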